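/- arXiv:0805.2625 — 3 statements merged into one kernel-verified Lean document; each statement's English description precedes it below -/
import Mathlib

section
/- Let F be an arbitrary field and n ≥ 1. For every g ∈ GL_{2n}(F), the transpose gᵗ lies in the double coset Sp_{2n}(F)·g·Sp_{2n}(F); that is, there exist h₁, h₂ ∈ Sp_{2n}(F) such that gᵗ = h₁ g h₂. -/
set_option linter.unusedSectionVars false

open Matrix Submodule FiniteDimensional Module

namespace SpDouble

variable {F : Type*} [Field F] {V : Type*} [AddCommGroup V] [Module F V]

section Pre

variable (B : LinearMap.BilinForm F V) (u : V →ₗ[F] V)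

/-- Move powers of a selfadjoint operator across the form. -/
lemma moveB (hsa : ∀ x y, B (u x) y = B x (u y)) (j : ℕ) (x y : V) :
    B x ((u ^ j) y) = B ((u ^ j) x) y := by
  induction j generalizing y with
  | zero => simp
  | succ j ih =>
    have h1 : (u ^ (j + 1)) y = (u ^ j) (u y) := by
      rw [pow_succ]; rfl
    have h2 : (u ^ (j + 1)) x = u ((u ^ j) x) := by
      rw [pow_succ']; rfl
    rw [h1, ih (u y), ← hsa, h2]

lemma apow_zero (halt : ∀ x, B x x = 0) (halt' : ∀ x, B (u x) x = 0)
    (hsa : ∀ x y, B (u x) y = B x (u y)) (k : ℕ) (x : V) :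
    B ((u ^ k) x) x = 0 := by
  rcases Nat.even_or_odd k with ⟨r, hr⟩ | ⟨r, hr⟩
  · have h1 : (u ^ k) x = (u ^ r) ((u ^ r) x) := by
      rw [hr, pow_add]; rfl
    rw [h1, ← moveB B u hsa, halt]
  · have h1 : (u ^ k) x = (u ^ r) (u ((u ^ r) x)) := by
      rw [hr, show 2 * r + 1 = r + (r + 1) by ring, pow_add, pow_succ']; rfl
    rw [h1, ← moveB B u hsa]
    exact halt' _

lemma gen_orth (halt : ∀ x, B x x = 0) (halt' : ∀ x, B (u x) x = 0)
    (hsa : ∀ x y, B (u x) y = B x (u y)) (i j : ℕ) (x : V) :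
    B ((u ^ i) x) ((u ^ j) x) = 0 := by
  rw [moveB B u hsa, show (u ^ j) ((u ^ i) x) = (u ^ (j + i)) x by rw [pow_add]; rfl,
    apow_zero B u halt halt' hsa]

lemma span_isotropic {S : Set V} (h : ∀ x ∈ S, ∀ y ∈ S, B x y = 0) :
    ∀ x ∈ span F S, ∀ y ∈ span F S, B x y = 0 := by
  intro x hx y hy
  induction hx, hy using Submodule.span_induction₂ with
  | mem_mem a b ha hb => exact h a ha b hb
  | zero_left => simp
  | zero_right => simp
  | add_left a b c _ _ _ hac hbc => simp [hac, hbc]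
  | add_right a b c _ _ _ hab hac => simp [hab, hac]
  | smul_left r a b _ _ hab => simp [hab]
  | smul_right r a b _ _ hab => simp [hab]

/-- The family `v, u v, u² v, ...` truncated at `k`. -/
def fam (v : V) (k : ℕ) : Fin k → V := fun i => (u ^ (i : ℕ)) v

/-- `u^k v` is in the span of the previous iterates. -/
def Pk (v : V) (k : ℕ) : Prop := (u ^ k) v ∈ span F (Set.range (fam u v k))

lemma fam_succ (v : V) (k : ℕ) :
    fam u v (k + 1) = Fin.snoc (fam u v k) ((u ^ k) v) := by
  funext i
  induction i using Fin.lastCases with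
  | last => simp [fam, Fin.snoc_last]
  | cast j => simp [fam, Fin.snoc_castSucc]

lemma li_of_not (v : V) (k : ℕ) (h : ∀ j < k, ¬ Pk u v j) :
    LinearIndependent F (fam u v k) := by
  induction k with
  | zero => exact linearIndependent_empty_type
  | succ k ih =>
    rw [fam_succ]
    exact linearIndependent_fin_snoc.2
      ⟨ih fun j hj => h j (hj.trans (Nat.lt_succ_self k)),
       h k (Nat.lt_succ_self k)⟩

/-- The degree of the cyclic subspace generated by `v`. -/
noncomputable def degree (v : V) : ℕ := sInf {k | Pk u v k}

variable [FiniteDimensional F V]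

lemma Pk_exists (v : V) : ∃ k, Pk u v k := by
  by_contra h
  push_neg at h
  have hli := li_of_not u v (finrank F V + 1) (fun j _ => h j)
  have := hli.fintype_card_le_finrank
  simp at this

lemma Pk_degree (v : V) : Pk u v (degree u v) := Nat.sInf_mem (Pk_exists u v)

lemma li_degree (v : V) : LinearIndependent F (fam u v (degree u v)) :=
  li_of_not u v _ (fun _ hj => Nat.notMem_of_lt_sInf hj)

lemma degree_le (v : V) : degree u v ≤ finrank F V := by
  have := (li_degree u v).fintype_card_le_finrank
  simpa using this

lemma degree_pos (v : V) (hv : v ≠ 0) : 0 < degree u v := by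
  rcases Nat.eq_zero_or_pos (degree u v) with h | h
  · exfalso
    have := Pk_degree u v
    rw [h] at this
    unfold Pk at this
    rw [show Set.range (fam u v 0) = ∅ from Set.range_eq_empty _, span_empty] at this
    simp at this
    exact hv (by simpa using this)
  · exact h

/-- The cyclic subspace generated by `v`. -/
noncomputable def cyc (v : V) : Submodule F V := span F (Set.range (fam u v (degree u v)))

lemma mem_cyc_self (v : V) (hv : v ≠ 0) : v ∈ cyc u v := by
  apply subset_span
  exact ⟨⟨0, degree_pos u v hv⟩, by simp [fam]⟩

lemma cyc_ne_bot (v : V) (hv : v ≠ 0) : cyc u v ≠ ⊥ := by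
  intro h
  have := mem_cyc_self u v hv
  rw [h] at this
  exact hv (by simpa using this)

lemma pow_mem_cyc (v : V) (i : ℕ) (hi : i < degree u v) : (u ^ i) v ∈ cyc u v :=
  subset_span ⟨⟨i, hi⟩, rfl⟩

lemma cyc_invariant (v : V) : ∀ x ∈ cyc u v, u x ∈ cyc u v := by
  intro x hx
  induction hx using Submodule.span_induction with
  | mem a ha =>
    obtain ⟨i, rfl⟩ := ha
    show u ((u ^ (i : ℕ)) v) ∈ cyc u v
    have h1 : u ((u ^ (i : ℕ)) v) = (u ^ ((i : ℕ) + 1)) v := by rw [pow_succ']; rfl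
    rw [h1]
    rcases lt_or_eq_of_le (Nat.succ_le_of_lt i.isLt) with h | h
    · exact pow_mem_cyc u v _ h
    · rw [show (i : ℕ) + 1 = degree u v from h]; exact Pk_degree u v
  | zero => simp
  | add a b _ _ ha hb => rw [map_add]; exact add_mem ha hb
  | smul r a _ ha => rw [_root_.map_smul]; exact smul_mem _ r ha

lemma cyc_isotropic (halt : ∀ x, B x x = 0) (halt' : ∀ x, B (u x) x = 0)
    (hsa : ∀ x y, B (u x) y = B x (u y)) (v : V) :
    ∀ x ∈ cyc u v, ∀ y ∈ cyc u v, B x y = 0 := by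
  apply span_isotropic
  rintro x ⟨i, rfl⟩ y ⟨j, rfl⟩
  exact gen_orth B u halt halt' hsa _ _ v

end Pre

section W

variable (B : LinearMap.BilinForm F V) (u : V →ₗ[F] V) [FiniteDimensional F V]

lemma exists_w (hB : B.Nondegenerate) (halt : ∀ x, B x x = 0) (v : V) (hv : v ≠ 0) :
    ∃ w : V, ∀ i, i < degree u v →
      B ((u ^ i) v) w = if i = degree u v - 1 then 1 else 0 := by
  classical
  have hd1 : degree u v - 1 < degree u v := by have := degree_pos u v hv; omega
  have hli : LinearIndependent F (fam u v (degree u v)) := li_degree u v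
  have hs : LinearIndepOn F id (Set.range (fam u v (degree u v))) :=
    hli.linearIndepOn_id
  let bs := Basis.extend hs
  have hmem : ∀ i (h : i < degree u v),
      fam u v (degree u v) ⟨i, h⟩ ∈ hs.extend (Set.subset_univ _) :=
    fun i h => hs.subset_extend _ (Set.mem_range_self _)
  set idx0 : hs.extend (Set.subset_univ _) :=
    ⟨fam u v (degree u v) ⟨degree u v - 1, hd1⟩, hmem _ hd1⟩ with hidx0
  set η : Module.Dual F V := bs.coord idx0 with hη
  refine ⟨(B.toDual hB).symm (-η), ?_⟩
  intro i hi
  have hBw : ∀ z : V, B ((B.toDual hB).symm (-η)) z = -η z := by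
    intro z; rw [LinearMap.BilinForm.apply_toDual_symm_apply]; simp
  have halt2 : LinearMap.IsAlt B := halt
  have hskew : B ((u ^ i) v) ((B.toDual hB).symm (-η)) = η ((u ^ i) v) := by
    have h2 := halt2.neg ((B.toDual hB).symm (-η)) ((u ^ i) v)
    rw [← h2, hBw ((u ^ i) v), neg_neg]
  rw [hskew]
  have hself : (u ^ i) v = bs ⟨fam u v (degree u v) ⟨i, hi⟩, hmem i hi⟩ := by
    rw [Basis.extend_apply_self]; rfl
  rw [hself, hη, Basis.coord_apply, Basis.repr_self, Finsupp.single_apply]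
  by_cases h : i = degree u v - 1
  · have : (⟨fam u v (degree u v) ⟨i, hi⟩, hmem i hi⟩ : hs.extend (Set.subset_univ _)) = idx0 := by
      rw [hidx0]
      apply Subtype.ext
      show fam u v (degree u v) ⟨i, hi⟩ = fam u v (degree u v) ⟨degree u v - 1, hd1⟩
      congr 1
      exact Fin.ext h
    simp only [this]; simp [h]
  · have : (⟨fam u v (degree u v) ⟨i, hi⟩, hmem i hi⟩ : hs.extend (Set.subset_univ _)) ≠ idx0 := by
      intro hcontra
      apply h
      have h3 : fam u v (degree u v) ⟨i, hi⟩ = fam u v (degree u v) ⟨degree u v - 1, hd1⟩ := by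
        have := congrArg Subtype.val hcontra
        simpa [hidx0] using this
      have h4 := hli.injective h3
      exact congrArg Fin.val h4
    simp [this, h]

lemma auxTri (d : ℕ) (hd : 0 < d) (T : ℕ → F)
    (hT : ∀ t, t < d → T t = if t = d - 1 then 1 else 0) (c : Fin d → F)
    (hc : ∀ j, j < d → (∑ i : Fin d, c i * T (i + j)) = 0) : ∀ i, c i = 0 := by
  have key : ∀ j, j < d → c ⟨d - 1 - j, by omega⟩ = 0 := by
    intro j
    induction j using Nat.strong_induction_on with
    | _ j IH =>
      intro hj
      have hsum := hc j hj
      rw [Finset.sum_eq_single (⟨d - 1 - j, by omega⟩ : Fin d)] at hsum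
      · rw [hT (d - 1 - j + j) (by omega), if_pos (by omega)] at hsum
        simpa using hsum
      · intro b _ hb
        rcases lt_or_ge ((b : ℕ) + j) d with hbj | hbj
        · rw [hT _ hbj, if_neg (by
            intro hcontra
            apply hb
            apply Fin.ext
            simp only
            omega), mul_zero]
        · have hb' : (b : ℕ) = d - 1 - (d - 1 - (b : ℕ)) := by have := b.isLt; omega
          have hcb : c b = 0 := by
            have := IH (d - 1 - (b : ℕ)) (by have := b.isLt; omega) (by have := b.isLt; omega)
            convert this using 2
            exact Fin.ext (by simpa using hb')
          rw [hcb, zero_mul]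
      · intro hmem
        exact absurd (Finset.mem_univ _) hmem
  intro i
  have hi := i.isLt
  have := key (d - 1 - (i : ℕ)) (by omega)
  convert this using 2
  exact Fin.ext (by simp; omega)

lemma pair_move (hsa : ∀ x y, B (u x) y = B x (u y)) (i j : ℕ) (x y : V) :
    B ((u ^ i) x) ((u ^ j) y) = B ((u ^ (i + j)) x) y := by
  rw [moveB B u hsa, show (u ^ j) ((u ^ i) x) = (u ^ (i + j)) x from by
    rw [Nat.add_comm, pow_add]; rfl]

lemma degree_le_degree_w (hsa : ∀ x y, B (u x) y = B x (u y)) (v w : V) (hv : v ≠ 0)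
    (hw : ∀ i, i < degree u v →
      B ((u ^ i) v) w = if i = degree u v - 1 then 1 else 0) :
    degree u v ≤ degree u w := by
  by_contra hlt
  push_neg at hlt
  have hd0 := degree_pos u v hv
  have hPd := Pk_degree u w
  rw [Pk] at hPd
  obtain ⟨a, ha⟩ := (mem_span_range_iff_exists_fun F).1 hPd
  set i0 := degree u v - 1 - degree u w with hi0
  have h1 : B ((u ^ i0) v) ((u ^ degree u w) w) = 1 := by
    rw [pair_move B u hsa, hw _ (by omega), if_pos (by omega)]
  rw [← ha, map_sum] at h1
  have h2 : ∀ j : Fin (degree u w),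
      B ((u ^ i0) v) (a j • fam u w (degree u w) j) = 0 := by
    intro j
    have hj := j.isLt
    rw [_root_.map_smul, smul_eq_mul]
    have : B ((u ^ i0) v) (fam u w (degree u w) j) = 0 := by
      show B ((u ^ i0) v) ((u ^ (j : ℕ)) w) = 0
      rw [pair_move B u hsa, hw _ (by omega), if_neg (by omega)]
    rw [this, mul_zero]
  rw [Finset.sum_congr rfl (fun j _ => h2 j), Finset.sum_const_zero] at h1
  exact one_ne_zero h1.symm

end W


section Inner

variable (B : LinearMap.BilinForm F V) (u : V →ₗ[F] V) [FiniteDimensional F V]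

/-- The bundle of properties of a hyperbolic pair of invariant isotropic subspaces. -/
def HypPair (P Q : Submodule F V) : Prop :=
  (∀ x ∈ P, u x ∈ P) ∧ (∀ x ∈ Q, u x ∈ Q) ∧
  (∀ x ∈ P, ∀ y ∈ P, B x y = 0) ∧ (∀ x ∈ Q, ∀ y ∈ Q, B x y = 0) ∧
  (∀ x ∈ P, (∀ y ∈ Q, B x y = 0) → x = 0) ∧
  (∀ y ∈ Q, (∀ x ∈ P, B x y = 0) → y = 0) ∧ P ≠ ⊥

lemma success (halt : ∀ x, B x x = 0) (halt' : ∀ x, B (u x) x = 0)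
    (hsa : ∀ x y, B (u x) y = B x (u y)) (v w : V) (hv : v ≠ 0)
    (hw : ∀ i, i < degree u v →
      B ((u ^ i) v) w = if i = degree u v - 1 then 1 else 0)
    (hdw : degree u w = degree u v) :
    ∃ P Q : Submodule F V, HypPair B u P Q := by
  refine ⟨cyc u v, cyc u w, cyc_invariant u v, cyc_invariant u w,
    cyc_isotropic B u halt halt' hsa v, cyc_isotropic B u halt halt' hsa w, ?_, ?_, ?_⟩
  · -- α : perfect pairing, left
    intro x hx hy
    obtain ⟨c, hc⟩ := (mem_span_range_iff_exists_fun F).1 hx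
    have hczero : ∀ i, c i = 0 := by
      apply auxTri (degree u v) (degree_pos u v hv) (fun t => B ((u ^ t) v) w)
        (fun t ht => hw t ht)
      intro j hj
      have hyQ : (u ^ j) w ∈ cyc u w := pow_mem_cyc u w j (by omega)
      have h0 := hy _ hyQ
      rw [← hc, map_sum, LinearMap.sum_apply] at h0
      rw [← h0]
      apply Finset.sum_congr rfl
      intro i _
      rw [_root_.map_smul, LinearMap.smul_apply, smul_eq_mul]
      congr 1
      show B ((u ^ ((i : ℕ) + j)) v) w = B ((u ^ (i : ℕ)) v) ((u ^ j) w)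
      exact (pair_move B u hsa _ _ v w).symm
    rw [← hc]
    simp [hczero]
  · -- β : perfect pairing, right
    intro y hy hx
    have hy' : y ∈ span F (Set.range (fam u w (degree u v))) := by
      have : cyc u w = span F (Set.range (fam u w (degree u v))) := by
        unfold cyc; rw [hdw]
      rwa [this] at hy
    obtain ⟨c, hc⟩ := (mem_span_range_iff_exists_fun F).1 hy'
    have hczero : ∀ i, c i = 0 := by
      apply auxTri (degree u v) (degree_pos u v hv) (fun t => B ((u ^ t) v) w)
        (fun t ht => hw t ht)
      intro j hj
      have hxP : (u ^ j) v ∈ cyc u v := pow_mem_cyc u v j hj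
      have h0 := hx _ hxP
      rw [← hc, map_sum] at h0
      rw [← h0]
      apply Finset.sum_congr rfl
      intro i _
      rw [_root_.map_smul, smul_eq_mul]
      congr 1
      show B ((u ^ ((i : ℕ) + j)) v) w = B ((u ^ j) v) ((u ^ (i : ℕ)) w)
      rw [pair_move B u hsa, Nat.add_comm]
    rw [← hc]
    simp [hczero]
  · -- P ≠ ⊥
    exact cyc_ne_bot u v hv

lemma inner (hB : B.Nondegenerate) (halt : ∀ x, B x x = 0)
    (halt' : ∀ x, B (u x) x = 0) (hsa : ∀ x y, B (u x) y = B x (u y)) :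
    ∀ (t : ℕ) (v : V), v ≠ 0 → finrank F V ≤ degree u v + t →
    ∃ P Q : Submodule F V, HypPair B u P Q := by
  intro t
  induction t with
  | zero =>
    intro v hv hr
    obtain ⟨w, hw⟩ := exists_w B u hB halt v hv
    have hle := degree_le_degree_w B u hsa v w hv hw
    have hdw : degree u w = degree u v :=
      le_antisymm (le_trans (degree_le u w) (by omega)) hle
    exact success B u halt halt' hsa v w hv hw hdw
  | succ t ih =>
    intro v hv hr
    obtain ⟨w, hw⟩ := exists_w B u hB halt v hv
    have hle := degree_le_degree_w B u hsa v w hv hw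
    by_cases hdw : degree u w = degree u v
    · exact success B u halt halt' hsa v w hv hw hdw
    · have hd0 := degree_pos u v hv
      have hwne : w ≠ 0 := by
        intro h
        have h1 := hw (degree u v - 1) (by omega)
        rw [h, if_pos rfl] at h1
        simp at h1
      exact ih w hwne (by
        have : degree u v + 1 ≤ degree u w := lt_of_le_of_ne hle (fun h => hdw h.symm)
        omega)

end Inner


section Main

variable {F : Type*} [Field F]

theorem thmA : ∀ (N : ℕ) (V : Type _) [AddCommGroup V] [Module F V]
    [FiniteDimensional F V] (B : LinearMap.BilinForm F V) (u : V →ₗ[F] V),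
    finrank F V ≤ N → B.Nondegenerate → (∀ x, B x x = 0) → (∀ x, B (u x) x = 0) →
    (∀ x y, B (u x) y = B x (u y)) → Function.Bijective u →
    ∃ b : V →ₗ[F] V, Function.Bijective b ∧ (∀ x, b (u x) = u (b x)) ∧
      (∀ x y, B (b x) (b y) = B (u x) y) := by
  intro N
  induction N with
  | zero =>
    intro V _ _ _ B u hN hB halt halt' hsa hu
    have hsing : Subsingleton V := by
      rw [← finrank_zero_iff (R := F)]; omega
    refine ⟨LinearMap.id, Function.bijective_id, fun x => rfl, fun x y => ?_⟩
    rw [Subsingleton.elim x 0, Subsingleton.elim y 0]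
    simp
  | succ N IH =>
    intro V _ _ _ B u hN hB halt halt' hsa hu
    by_cases h0 : finrank F V = 0
    · have hsing : Subsingleton V := by rw [← finrank_zero_iff (R := F)]; exact h0
      refine ⟨LinearMap.id, Function.bijective_id, fun x => rfl, fun x y => ?_⟩
      rw [Subsingleton.elim x 0, Subsingleton.elim y 0]
      simp
    · have hnt : Nontrivial V := by
        rw [← finrank_pos_iff (R := F)]; omega
      obtain ⟨v₀, hv₀⟩ := exists_ne (0 : V)
      obtain ⟨P, Q, hP, hQ, hPiso, hQiso, hα, hβ, hPne⟩ :=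
        inner B u hB halt halt' hsa (finrank F V) v₀ hv₀ (Nat.le_add_left _ _)
      have halt2 : LinearMap.IsAlt B := halt
      have hrefl : LinearMap.IsRefl B := halt2.isRefl
      have hskew : ∀ x y : V, B x y = -B y x := by
        intro x y; rw [halt2.neg y x]
      -- the nondegenerate subspace W
      have hWinv : ∀ x ∈ P ⊔ Q, u x ∈ P ⊔ Q := by
        intro x hx
        obtain ⟨p, hp, q, hq, rfl⟩ := Submodule.mem_sup.1 hx
        rw [map_add]
        exact Submodule.add_mem _ (Submodule.mem_sup_left (hP p hp))
          (Submodule.mem_sup_right (hQ q hq))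
      have hWnd : (B.restrict (P ⊔ Q)).Nondegenerate := by
        refine (LinearMap.IsRefl.nondegenerate_iff_separatingLeft (B := B.restrict (P ⊔ Q))
          (fun (x y : ↥(P ⊔ Q)) h => hrefl (x : V) y h)).2 ?_
        rintro ⟨z, hz⟩ hzero
        have hzero' : ∀ y ∈ P ⊔ Q, B z y = 0 := by
          intro y hy; exact hzero ⟨y, hy⟩
        obtain ⟨p, hp, q, hq, hpq⟩ := Submodule.mem_sup.1 hz
        have hp0 : p = 0 := by
          apply hα p hp
          intro y hy
          have h1 := hzero' y (Submodule.mem_sup_right hy)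
          rw [← hpq, map_add, LinearMap.add_apply, hQiso q hq y hy, add_zero] at h1
          exact h1
        have hzq : z = q := by rw [← hpq, hp0, zero_add]
        have hq0 : q = 0 := by
          apply hβ q hq
          intro x hx
          rw [hskew]
          rw [← hzq]
          rw [hzero' x (Submodule.mem_sup_left hx), neg_zero]
        apply Subtype.ext
        show z = 0
        rw [hzq, hq0]
      have hCompl : IsCompl (P ⊔ Q) (B.orthogonal (P ⊔ Q)) :=
        LinearMap.BilinForm.isCompl_orthogonal_of_restrict_nondegenerate hrefl hWnd
      set C := B.orthogonal (P ⊔ Q) with hCdef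
      have hWC : ∀ w ∈ P ⊔ Q, ∀ c ∈ C, B w c = 0 := by
        intro w hw c hc
        exact hc w hw
      have hCW : ∀ c ∈ C, ∀ w ∈ P ⊔ Q, B c w = 0 := by
        intro c hc w hw
        rw [hskew, hWC w hw c hc, neg_zero]
      have hCinv : ∀ x ∈ C, u x ∈ C := by
        intro x hx
        intro w hw
        show B w (u x) = 0
        rw [← hsa]
        exact hWC _ (hWinv w hw) x hx
      -- restricted data
      set uC := u.restrict hCinv with huC
      set BC := B.restrict C with hBC
      have hBCnd : BC.Nondegenerate := by
        refine (LinearMap.IsRefl.nondegenerate_iff_separatingLeft (B := BC)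
          (fun (x y : ↥C) h => hrefl (x : V) y h)).2 ?_
        rintro ⟨z, hz⟩ hzero
        apply Subtype.ext
        show z = 0
        apply hB.1
        intro y
        have hy : y ∈ P ⊔ Q ⊔ C := by rw [hCompl.sup_eq_top]; trivial
        obtain ⟨w, hw, c, hc, rfl⟩ := Submodule.mem_sup.1 hy
        rw [map_add]
        rw [hCW z hz w hw, zero_add]
        exact hzero ⟨c, hc⟩
      have hfrC : finrank F ↥C ≤ N := by
        have hsum := Submodule.finrank_add_eq_of_isCompl hCompl
        have hWpos : 0 < finrank F ↥(P ⊔ Q) := by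
          obtain ⟨p₀, hp₀, hp₀ne⟩ := (Submodule.ne_bot_iff P).1 hPne
          have : Nontrivial ↥(P ⊔ Q) := by
            refine ⟨⟨p₀, Submodule.mem_sup_left hp₀⟩, 0, ?_⟩
            intro h
            exact hp₀ne (by simpa using congrArg Subtype.val h)
          exact finrank_pos_iff.2 this
        omega
      have haltC : ∀ x : ↥C, BC x x = 0 := fun x => halt x
      have halt'C : ∀ x : ↥C, BC (uC x) x = 0 := fun x => halt' x
      have hsaC : ∀ x y : ↥C, BC (uC x) y = BC x (uC y) := fun x y => hsa x y
      have huCbij : Function.Bijective uC := by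
        have hinj : Function.Injective uC := by
          intro x y hxy
          apply Subtype.ext
          apply hu.1
          have := congrArg Subtype.val hxy
          exact this
        exact ⟨hinj, LinearMap.injective_iff_surjective.1 hinj⟩
      obtain ⟨b', hb'bij, hb'comm, hb'iso⟩ := IH ↥C BC uC hfrC hBCnd haltC halt'C hsaC huCbij
      -- complements for the three projections
      have h1 : IsCompl P (Q ⊔ C) := by
        constructor
        · rw [Submodule.disjoint_def]
          intro x hxP hxQC
          obtain ⟨q, hq, c, hc, hqc⟩ := Submodule.mem_sup.1 hxQC
          apply hα x hxP
          intro y hy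
          rw [← hqc, map_add, LinearMap.add_apply, hQiso q hq y hy, zero_add]
          exact hCW c hc y (Submodule.mem_sup_right hy)
        · rw [codisjoint_iff, ← sup_assoc]
          exact hCompl.sup_eq_top
      have h2 : IsCompl Q (P ⊔ C) := by
        constructor
        · rw [Submodule.disjoint_def]
          intro x hxQ hxPC
          obtain ⟨p, hp, c, hc, hpc⟩ := Submodule.mem_sup.1 hxPC
          apply hβ x hxQ
          intro y hy
          rw [← hpc, map_add]
          rw [hPiso y hy p hp, zero_add]
          exact hWC y (Submodule.mem_sup_left hy) c hc
        · rw [codisjoint_iff, ← sup_assoc, sup_comm Q P]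
          exact hCompl.sup_eq_top
      have h3 : IsCompl C (P ⊔ Q) := hCompl.symm
      set πP := Submodule.projectionOnto P (Q ⊔ C) h1 with hπP
      set πQ := Submodule.projectionOnto Q (P ⊔ C) h2 with hπQ
      set πC := Submodule.projectionOnto C (P ⊔ Q) h3 with hπC
      have hproj : ∀ p q c (hp : p ∈ P) (hq : q ∈ Q) (hc : c ∈ C),
          πP (p + q + c) = ⟨p, hp⟩ ∧ πQ (p + q + c) = ⟨q, hq⟩ ∧
          πC (p + q + c) = ⟨c, hc⟩ := by
        intro p q c hp hq hc
        refine ⟨?_, ?_, ?_⟩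
        · have e1 : p + q + c = ↑(⟨p, hp⟩ : ↥P) + (q + c) := by push_cast; abel
          rw [e1, map_add, Submodule.projectionOnto_apply_left h1,
            Submodule.projectionOnto_apply_of_mem_right h1
              (Submodule.add_mem _ (Submodule.mem_sup_left hq) (Submodule.mem_sup_right hc)),
            add_zero]
        · have e1 : p + q + c = ↑(⟨q, hq⟩ : ↥Q) + (p + c) := by push_cast; abel
          rw [e1, map_add, Submodule.projectionOnto_apply_left h2,
            Submodule.projectionOnto_apply_of_mem_right h2
              (Submodule.add_mem _ (Submodule.mem_sup_left hp) (Submodule.mem_sup_right hc)),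
            add_zero]
        · have e1 : p + q + c = ↑(⟨c, hc⟩ : ↥C) + (p + q) := by push_cast; abel
          rw [e1, map_add, Submodule.projectionOnto_apply_left h3,
            Submodule.projectionOnto_apply_of_mem_right h3
              (Submodule.add_mem _ (Submodule.mem_sup_left hp) (Submodule.mem_sup_right hq)),
            add_zero]
      have hdec : ∀ x : V, ∃ p q c, ∃ (hp : p ∈ P) (hq : q ∈ Q) (hc : c ∈ C),
          x = p + q + c := by
        intro x
        have hx : x ∈ P ⊔ Q ⊔ C := by rw [hCompl.sup_eq_top]; trivial
        obtain ⟨w, hw, c, hc, rfl⟩ := Submodule.mem_sup.1 hx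
        obtain ⟨p, hp, q, hq, rfl⟩ := Submodule.mem_sup.1 hw
        exact ⟨p, q, c, hp, hq, hc, rfl⟩
      set bmap : V →ₗ[F] V :=
        u ∘ₗ P.subtype ∘ₗ πP + Q.subtype ∘ₗ πQ + C.subtype ∘ₗ b' ∘ₗ πC with hbmap
      have hbx : ∀ p q c (hp : p ∈ P) (hq : q ∈ Q) (hc : c ∈ C),
          bmap (p + q + c) = u p + q + ↑(b' ⟨c, hc⟩) := by
        intro p q c hp hq hc
        obtain ⟨e1, e2, e3⟩ := hproj p q c hp hq hc
        rw [hbmap]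
        simp only [LinearMap.add_apply, LinearMap.comp_apply, e1, e2, e3]
        rfl
      -- the coercion lemma for uC and b'
      have huCcoe : ∀ z : ↥C, (↑(uC z) : V) = u ↑z := fun z => rfl
      have hIHiso : ∀ z z' : ↥C, B ↑(b' z) ↑(b' z') = B (u ↑z) ↑z' := by
        intro z z'
        have := hb'iso z z'
        rw [hBC] at this
        exact this
      refine ⟨bmap, ?_, ?_, ?_⟩
      · -- bijective
        have hinj : Function.Injective bmap := by
          rw [injective_iff_map_eq_zero]
          intro x hx
          obtain ⟨p, q, c, hp, hq, hc, rfl⟩ := hdec x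
          rw [hbx p q c hp hq hc] at hx
          obtain ⟨e1, e2, e3⟩ := hproj (u p) q (↑(b' ⟨c, hc⟩)) (hP p hp) hq (b' ⟨c, hc⟩).2
          rw [hx] at e1 e2 e3
          simp only [map_zero] at e1 e2 e3
          have hup : u p = 0 := by
            have := congrArg Subtype.val e1.symm
            simpa using this
          have hp0 : p = 0 := by
            apply hu.1
            rw [hup, map_zero]
          have hq0 : q = 0 := by
            have := congrArg Subtype.val e2.symm
            simpa using this
          have hc0 : c = 0 := by
            have hb'c : b' ⟨c, hc⟩ = 0 := by
              apply Subtype.ext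
              have := congrArg Subtype.val e3.symm
              simpa using this
            have : (⟨c, hc⟩ : ↥C) = 0 := by
              apply hb'bij.1
              rw [hb'c, map_zero]
            simpa using congrArg Subtype.val this
          rw [hp0, hq0, hc0]
          simp
        exact ⟨hinj, LinearMap.injective_iff_surjective.1 hinj⟩
      · -- commutes with u
        intro x
        obtain ⟨p, q, c, hp, hq, hc, rfl⟩ := hdec x
        have hux : u (p + q + c) = u p + u q + u c := by rw [map_add, map_add]
        rw [hux, hbx (u p) (u q) (u c) (hP p hp) (hQ q hq) (hCinv c hc),
          hbx p q c hp hq hc]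
        have hz : (⟨u c, hCinv c hc⟩ : ↥C) = uC ⟨c, hc⟩ := rfl
        rw [hz, hb'comm]
        rw [map_add, map_add]
        rfl
      · -- isometry
        intro x y
        obtain ⟨p, q, c, hp, hq, hc, rfl⟩ := hdec x
        obtain ⟨p', q', c', hp', hq', hc', rfl⟩ := hdec y
        rw [hbx p q c hp hq hc, hbx p' q' c' hp' hq' hc']
        have hux : u (p + q + c) = u p + u q + u c := by rw [map_add, map_add]
        rw [hux]
        simp only [map_add, LinearMap.add_apply]
        have hupP := hP p hp
        have hupP' := hP p' hp'
        have huqQ := hQ q hq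
        have hucC := hCinv c hc
        have hbcC : (↑(b' ⟨c, hc⟩) : V) ∈ C := (b' ⟨c, hc⟩).2
        have hbcC' : (↑(b' ⟨c', hc'⟩) : V) ∈ C := (b' ⟨c', hc'⟩).2
        have z1 : B (u p) (u p') = 0 := hPiso _ hupP _ hupP'
        have z2 : B (u p) ↑(b' ⟨c', hc'⟩) = 0 :=
          hWC _ (Submodule.mem_sup_left hupP) _ hbcC'
        have z3 : B q q' = 0 := hQiso _ hq _ hq'
        have z4 : B q ↑(b' ⟨c', hc'⟩) = 0 :=
          hWC _ (Submodule.mem_sup_right hq) _ hbcC'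
        have z5 : B ↑(b' ⟨c, hc⟩) (u p') = 0 :=
          hCW _ hbcC _ (Submodule.mem_sup_left hupP')
        have z6 : B ↑(b' ⟨c, hc⟩) q' = 0 := hCW _ hbcC _ (Submodule.mem_sup_right hq')
        have z7 : B (u p) p' = 0 := hPiso _ hupP _ hp'
        have z8 : B (u p) c' = 0 := hWC _ (Submodule.mem_sup_left hupP) _ hc'
        have z9 : B (u q) p' = B q (u p') := hsa q p'
        have z10 : B (u q) q' = 0 := hQiso _ (hQ q hq) _ hq'
        have z11 : B (u q) c' = 0 := hWC _ (Submodule.mem_sup_right (hQ q hq)) _ hc'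
        have z12 : B (u c) p' = 0 := hCW _ hucC _ (Submodule.mem_sup_left hp')
        have z13 : B (u c) q' = 0 := hCW _ hucC _ (Submodule.mem_sup_right hq')
        have z14 : B ↑(b' ⟨c, hc⟩) ↑(b' ⟨c', hc'⟩) = B (u c) c' := by
          rw [hIHiso ⟨c, hc⟩ ⟨c', hc'⟩]
        simp only [z1, z2, z3, z4, z5, z6, z7, z8, z9, z10, z11, z12, z13, z14,
          add_zero, zero_add]

end Main


end SpDouble

/-- `J_{2n} = [[0, I_n], [-I_n, 0]]`, the standard symplectic matrix. -/
def symplecticJ (n : ℕ) (F : Type*) [Field F] :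
    Matrix (Fin n ⊕ Fin n) (Fin n ⊕ Fin n) F :=
  Matrix.fromBlocks 0 1 (-1) 0

/-- A matrix `g` is symplectic if `gᵀ J g = J`. -/
def IsSymplecticMat {n : ℕ} {F : Type*} [Field F]
    (g : Matrix (Fin n ⊕ Fin n) (Fin n ⊕ Fin n) F) : Prop :=
  gᵀ * symplecticJ n F * g = symplecticJ n F

namespace SpDouble

section MatrixBridge

variable {F : Type*} [Field F] {n : ℕ}

local notation "NN" => (Fin n ⊕ Fin n)

lemma J_transpose : (symplecticJ n F)ᵀ = -(symplecticJ n F) := by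
  simp [symplecticJ, Matrix.fromBlocks_transpose, Matrix.fromBlocks_neg]

lemma J_mul_J : symplecticJ n F * symplecticJ n F = -1 := by
  have h1 : (-1 : Matrix NN NN F) = Matrix.fromBlocks (-1) 0 0 (-1) := by
    rw [← Matrix.fromBlocks_one (l := Fin n) (m := Fin n) (α := F), Matrix.fromBlocks_neg]
    simp
  rw [symplecticJ, Matrix.fromBlocks_multiply, h1]
  simp

lemma J_alt (x : NN → F) : x ⬝ᵥ (symplecticJ n F *ᵥ x) = 0 := by
  have h1 : symplecticJ n F *ᵥ x =
      Sum.elim (x ∘ Sum.inr) (-(x ∘ Sum.inl)) := by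
    rw [symplecticJ, Matrix.fromBlocks_mulVec]
    simp [Matrix.neg_mulVec]
  rw [h1, dotProduct, Fintype.sum_sum_type]
  simp only [Sum.elim_inl, Sum.elim_inr, Pi.neg_apply, Function.comp_apply, mul_neg]
  rw [Finset.sum_neg_distrib,
    Finset.sum_congr rfl (fun i _ => mul_comm (x (Sum.inl i)) (x (Sum.inr i)))]
  simp

lemma bform_left (A M : Matrix NN NN F) (x y : NN → F) :
    (A *ᵥ x) ⬝ᵥ (M *ᵥ y) = x ⬝ᵥ ((Aᵀ * M) *ᵥ y) := by
  rw [show A *ᵥ x = x ᵥ* Aᵀ from by rw [Matrix.vecMul_transpose],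
    Matrix.dotProduct_mulVec, Matrix.dotProduct_mulVec, Matrix.vecMul_vecMul]

lemma bform_right (M A : Matrix NN NN F) (x y : NN → F) :
    x ⬝ᵥ (M *ᵥ (A *ᵥ y)) = x ⬝ᵥ ((M * A) *ᵥ y) := by
  rw [Matrix.mulVec_mulVec]

lemma eq_of_forall_dot (M M' : Matrix NN NN F)
    (h : ∀ x y, x ⬝ᵥ (M *ᵥ y) = x ⬝ᵥ (M' *ᵥ y)) : M = M' := by
  ext i j
  have := h (Pi.single i 1) (Pi.single j 1)
  simpa [Matrix.mulVec_single, single_dotProduct] using this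

lemma eq_of_forall_mulVec (M M' : Matrix NN NN F)
    (h : ∀ x, M *ᵥ x = M' *ᵥ x) : M = M' := by
  ext i j
  have := congrFun (h (Pi.single j 1)) i
  simpa [Matrix.mulVec_single] using this

end MatrixBridge

end SpDouble

set_option maxHeartbeats 1600000 in
open SpDouble in
/-- For every `g ∈ GL_{2n}(F)`, the transpose `gᵗ` lies in the double coset
`Sp_{2n}(F) · g · Sp_{2n}(F)`. -/
theorem transpose_mem_doubleCoset (F : Type*) [Field F] (n : ℕ) (hn : 1 ≤ n)
    (g : GL (Fin n ⊕ Fin n) F) :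
    ∃ h₁ h₂ : GL (Fin n ⊕ Fin n) F,
      IsSymplecticMat (h₁ : Matrix (Fin n ⊕ Fin n) (Fin n ⊕ Fin n) F) ∧
      IsSymplecticMat (h₂ : Matrix (Fin n ⊕ Fin n) (Fin n ⊕ Fin n) F) ∧
      (g : Matrix (Fin n ⊕ Fin n) (Fin n ⊕ Fin n) F)ᵀ =
        (h₁ : Matrix (Fin n ⊕ Fin n) (Fin n ⊕ Fin n) F) *
        (g : Matrix (Fin n ⊕ Fin n) (Fin n ⊕ Fin n) F) *
        (h₂ : Matrix (Fin n ⊕ Fin n) (Fin n ⊕ Fin n) F) := by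
  classical
  set Jm : Matrix (Fin n ⊕ Fin n) (Fin n ⊕ Fin n) F := symplecticJ n F with hJm
  set G : Matrix (Fin n ⊕ Fin n) (Fin n ⊕ Fin n) F := ↑g with hGdef
  set Gi : Matrix (Fin n ⊕ Fin n) (Fin n ⊕ Fin n) F := ↑g⁻¹ with hGidef
  have hGGi : G * Gi = 1 := g.mul_inv
  have hGiG : Gi * G = 1 := g.inv_mul
  have hJJ : Jm * Jm = -1 := J_mul_J
  have hJT : Jmᵀ = -Jm := J_transpose
  have hGtGit : Gᵀ * Giᵀ = 1 := by rw [← Matrix.transpose_mul, hGiG, Matrix.transpose_one]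
  have hGitGt : Giᵀ * Gᵀ = 1 := by rw [← Matrix.transpose_mul, hGGi, Matrix.transpose_one]
  have cJJ : ∀ X : Matrix (Fin n ⊕ Fin n) (Fin n ⊕ Fin n) F, Jm * (Jm * X) = -X :=
    fun X => by rw [← mul_assoc, hJJ, neg_mul, one_mul]
  have cGGi : ∀ X : Matrix (Fin n ⊕ Fin n) (Fin n ⊕ Fin n) F, G * (Gi * X) = X :=
    fun X => by rw [← mul_assoc, hGGi, one_mul]
  have cGiG : ∀ X : Matrix (Fin n ⊕ Fin n) (Fin n ⊕ Fin n) F, Gi * (G * X) = X :=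
    fun X => by rw [← mul_assoc, hGiG, one_mul]
  have cGtGit : ∀ X : Matrix (Fin n ⊕ Fin n) (Fin n ⊕ Fin n) F, Gᵀ * (Giᵀ * X) = X :=
    fun X => by rw [← mul_assoc, hGtGit, one_mul]
  have cGitGt : ∀ X : Matrix (Fin n ⊕ Fin n) (Fin n ⊕ Fin n) F, Giᵀ * (Gᵀ * X) = X :=
    fun X => by rw [← mul_assoc, hGitGt, one_mul]
  set U : Matrix (Fin n ⊕ Fin n) (Fin n ⊕ Fin n) F := -(G * Jm * Gᵀ * Jm) with hU
  set Ui : Matrix (Fin n ⊕ Fin n) (Fin n ⊕ Fin n) F := -(Jm * Giᵀ * Jm * Gi) with hUi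
  have cUdef : ∀ X : Matrix (Fin n ⊕ Fin n) (Fin n ⊕ Fin n) F,
      U * X = -(G * (Jm * (Gᵀ * (Jm * X)))) := fun X => by
    rw [hU]; simp only [neg_mul, mul_assoc]
  have cGJGJ : ∀ X : Matrix (Fin n ⊕ Fin n) (Fin n ⊕ Fin n) F,
      G * (Jm * (Gᵀ * (Jm * X))) = -(U * X) := fun X => by rw [cUdef X, neg_neg]
  have hUUi : U * Ui = 1 := by
    rw [hU, hUi]
    simp only [neg_mul, mul_neg, neg_neg, mul_assoc, cJJ, cGGi, cGiG, cGtGit, cGitGt,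
      mul_neg, neg_neg, hGGi, hJJ, mul_one, one_mul]
  have hUiU : Ui * U = 1 := by
    rw [hU, hUi]
    simp only [neg_mul, mul_neg, neg_neg, mul_assoc, cJJ, cGGi, cGiG, cGtGit, cGitGt,
      mul_neg, neg_neg, hGiG, hJJ, mul_one, one_mul]
  have cUUi : ∀ X : Matrix (Fin n ⊕ Fin n) (Fin n ⊕ Fin n) F, U * (Ui * X) = X :=
    fun X => by rw [← mul_assoc, hUUi, one_mul]
  have cUiU : ∀ X : Matrix (Fin n ⊕ Fin n) (Fin n ⊕ Fin n) F, Ui * (U * X) = X :=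
    fun X => by rw [← mul_assoc, hUiU, one_mul]
  have hUtJ : Uᵀ * Jm = Jm * U := by
    rw [hU]
    simp only [Matrix.transpose_neg, Matrix.transpose_mul, Matrix.transpose_transpose, hJT,
      neg_mul, mul_neg, neg_neg, mul_assoc]
  have hUtJc : Uᵀ * Jm = (Gᵀ * Jm)ᵀ * Jm * (Gᵀ * Jm) := by
    rw [hU]
    simp only [Matrix.transpose_neg, Matrix.transpose_mul, Matrix.transpose_transpose, hJT,
      neg_mul, mul_neg, neg_neg, mul_assoc]
  -- the bilinear form and the operator
  set Bf : LinearMap.BilinForm F ((Fin n ⊕ Fin n) → F) :=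
    LinearMap.mk₂ F (fun x y => x ⬝ᵥ (Jm *ᵥ y))
      (fun x x' y => by simp [add_dotProduct])
      (fun c x y => by simp [smul_dotProduct])
      (fun x y y' => by simp [Matrix.mulVec_add, dotProduct_add])
      (fun c x y => by simp [Matrix.mulVec_smul, dotProduct_smul]) with hBfdef
  have hBf : ∀ x y, Bf x y = x ⬝ᵥ (Jm *ᵥ y) := fun x y => rfl
  set uf : ((Fin n ⊕ Fin n) → F) →ₗ[F] ((Fin n ⊕ Fin n) → F) := Matrix.mulVecLin U with hufdef
  have huf : ∀ x, uf x = U *ᵥ x := fun x => rfl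
  have hJnJ : Jm * (-Jm) = 1 := by rw [mul_neg, hJJ, neg_neg]
  have hBfnd : Bf.Nondegenerate := by
    refine (LinearMap.IsRefl.nondegenerate_iff_separatingLeft
      (LinearMap.IsAlt.isRefl (fun x => J_alt x))).2 ?_
    intro x hx
    have hxz : ∀ z, x ⬝ᵥ z = 0 := by
      intro z
      have := hx ((-Jm) *ᵥ z)
      rwa [hBf, Matrix.mulVec_mulVec, hJnJ, Matrix.one_mulVec] at this
    funext i
    have := hxz (Pi.single i 1)
    simpa [dotProduct_single] using this
  have haltf : ∀ x, Bf x x = 0 := fun x => J_alt x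
  have hsaf : ∀ x y, Bf (uf x) y = Bf x (uf y) := by
    intro x y
    rw [hBf, hBf, huf, huf, bform_left, bform_right, hUtJ]
  have halt'f : ∀ x, Bf (uf x) x = 0 := by
    intro x
    rw [hBf, huf, bform_left, hUtJc, ← bform_right, ← bform_left]
    exact J_alt _
  have hufbij : Function.Bijective uf := by
    constructor
    · intro a b hab
      have h1 : ∀ x, Ui *ᵥ (U *ᵥ x) = x := by
        intro x; rw [Matrix.mulVec_mulVec, hUiU, Matrix.one_mulVec]
      rw [← h1 a, ← h1 b]
      show Ui *ᵥ (uf a) = Ui *ᵥ (uf b)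
      rw [hab]
    · intro y
      refine ⟨Ui *ᵥ y, ?_⟩
      show U *ᵥ (Ui *ᵥ y) = y
      rw [Matrix.mulVec_mulVec, hUUi, Matrix.one_mulVec]
  obtain ⟨b, hbbij, hbcomm, hbiso⟩ :=
    thmA (Module.finrank F ((Fin n ⊕ Fin n) → F)) ((Fin n ⊕ Fin n) → F) Bf uf le_rfl
      hBfnd haltf halt'f hsaf hufbij
  set Bm : Matrix (Fin n ⊕ Fin n) (Fin n ⊕ Fin n) F := LinearMap.toMatrix' b with hBm
  have hbapp : ∀ x, b x = Bm *ᵥ x := by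
    intro x
    conv_lhs => rw [← Matrix.toLin'_toMatrix' b]
    rw [Matrix.toLin'_apply]
  have hcommM : Bm * U = U * Bm := by
    apply eq_of_forall_mulVec
    intro x
    rw [← Matrix.mulVec_mulVec, ← Matrix.mulVec_mulVec, ← hbapp, ← huf, ← huf,
      ← hbapp, hbcomm]
  set e : ((Fin n ⊕ Fin n) → F) ≃ₗ[F] ((Fin n ⊕ Fin n) → F) :=
    LinearEquiv.ofBijective b hbbij with he
  set Bi : Matrix (Fin n ⊕ Fin n) (Fin n ⊕ Fin n) F :=
    LinearMap.toMatrix' (e.symm : ((Fin n ⊕ Fin n) → F) →ₗ[F] ((Fin n ⊕ Fin n) → F)) with hBi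
  have hcomp1 : b ∘ₗ (e.symm : ((Fin n ⊕ Fin n) → F) →ₗ[F] ((Fin n ⊕ Fin n) → F)) =
      LinearMap.id := by
    apply LinearMap.ext
    intro x
    show b (e.symm x) = x
    have h1 : b (e.symm x) = e (e.symm x) := rfl
    rw [h1, e.apply_symm_apply]
  have hcomp2 : (e.symm : ((Fin n ⊕ Fin n) → F) →ₗ[F] ((Fin n ⊕ Fin n) → F)) ∘ₗ b =
      LinearMap.id := by
    apply LinearMap.ext
    intro x
    show e.symm (b x) = x
    have h1 : b x = e x := rfl
    rw [h1, e.symm_apply_apply]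
  have hBmBi : Bm * Bi = 1 := by
    rw [hBm, hBi, ← LinearMap.toMatrix'_comp, hcomp1, LinearMap.toMatrix'_id]
  have hBiBm : Bi * Bm = 1 := by
    rw [hBm, hBi, ← LinearMap.toMatrix'_comp, hcomp2, LinearMap.toMatrix'_id]
  have cBmBi : ∀ X : Matrix (Fin n ⊕ Fin n) (Fin n ⊕ Fin n) F, Bm * (Bi * X) = X :=
    fun X => by rw [← mul_assoc, hBmBi, one_mul]
  have cBiBm : ∀ X : Matrix (Fin n ⊕ Fin n) (Fin n ⊕ Fin n) F, Bi * (Bm * X) = X :=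
    fun X => by rw [← mul_assoc, hBiBm, one_mul]
  have hBJB : Bmᵀ * Jm * Bm = Jm * U := by
    apply eq_of_forall_dot
    intro x y
    calc x ⬝ᵥ ((Bmᵀ * Jm * Bm) *ᵥ y) = x ⬝ᵥ ((Bmᵀ * Jm) *ᵥ (Bm *ᵥ y)) := by
          rw [bform_right]
    _ = (Bm *ᵥ x) ⬝ᵥ (Jm *ᵥ (Bm *ᵥ y)) := by rw [← bform_left]
    _ = Bf (b x) (b y) := by rw [hBf, hbapp, hbapp]
    _ = Bf (uf x) y := hbiso x y
    _ = (U *ᵥ x) ⬝ᵥ (Jm *ᵥ y) := by rw [hBf, huf]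
    _ = x ⬝ᵥ ((Uᵀ * Jm) *ᵥ y) := by rw [bform_left]
    _ = x ⬝ᵥ ((Jm * U) *ᵥ y) := by rw [hUtJ]
  -- commutation of Bm, Bi with U, Ui
  have hUiBm : Ui * Bm = Bm * Ui := by
    have h' := congrArg (fun X => Ui * (X * Ui)) hcommM
    simp only [mul_assoc, cUiU, hUUi, mul_one] at h'
    exact h'
  have cUiBm : ∀ X : Matrix (Fin n ⊕ Fin n) (Fin n ⊕ Fin n) F, Ui * (Bm * X) = Bm * (Ui * X) :=
    fun X => by rw [← mul_assoc, hUiBm, mul_assoc]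
  have cBmUi : ∀ X : Matrix (Fin n ⊕ Fin n) (Fin n ⊕ Fin n) F, Bm * (Ui * X) = Ui * (Bm * X) :=
    fun X => by rw [← mul_assoc, ← hUiBm, mul_assoc]
  have cUBm : ∀ X : Matrix (Fin n ⊕ Fin n) (Fin n ⊕ Fin n) F, U * (Bm * X) = Bm * (U * X) :=
    fun X => by rw [← mul_assoc, ← hcommM, mul_assoc]
  -- the transpose of Bm
  have hBmJ : Bmᵀ * Jm = Jm * (U * Bi) := by
    have h1 : (Bmᵀ * Jm * Bm) * Bi = Bmᵀ * Jm := by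
      rw [mul_assoc (Bmᵀ * Jm) Bm Bi, hBmBi, mul_one]
    rw [← h1, hBJB, mul_assoc]
  have hBmT : Bmᵀ = -(Jm * (U * (Bi * Jm))) := by
    calc Bmᵀ = Bmᵀ * (Jm * -Jm) := by rw [hJnJ, mul_one]
    _ = (Bmᵀ * Jm) * -Jm := by rw [mul_assoc]
    _ = (Jm * (U * Bi)) * -Jm := by rw [hBmJ]
    _ = -(Jm * (U * (Bi * Jm))) := by simp only [mul_neg, mul_assoc]
  have hBit1 : Biᵀ * Bmᵀ = 1 := by rw [← Matrix.transpose_mul, hBmBi, Matrix.transpose_one]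
  have hcand : Bmᵀ * (-(Jm * (Bm * (Ui * Jm)))) = 1 := by
    rw [hBmT]
    simp only [neg_mul, mul_neg, neg_neg, mul_assoc, cJJ, cBiBm, cUUi, hJJ,
      mul_one, one_mul]
  have hBiT : Biᵀ = -(Jm * (Bm * (Ui * Jm))) := by
    calc Biᵀ = Biᵀ * (Bmᵀ * (-(Jm * (Bm * (Ui * Jm))))) := by rw [hcand, mul_one]
    _ = (Biᵀ * Bmᵀ) * (-(Jm * (Bm * (Ui * Jm)))) := by rw [mul_assoc]
    _ = -(Jm * (Bm * (Ui * Jm))) := by rw [hBit1, one_mul]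
  -- the symplectic double coset elements
  set h1m : Matrix (Fin n ⊕ Fin n) (Fin n ⊕ Fin n) F := -(Jm * (Gi * Bm)) with hh1m
  set h1i : Matrix (Fin n ⊕ Fin n) (Fin n ⊕ Fin n) F := Bi * (G * Jm) with hh1i
  set h2m : Matrix (Fin n ⊕ Fin n) (Fin n ⊕ Fin n) F := Gi * (Bi * (G * (Jm * Gᵀ))) with hh2m
  set h2i : Matrix (Fin n ⊕ Fin n) (Fin n ⊕ Fin n) F :=
    -(Giᵀ * (Jm * (Gi * (Bm * G)))) with hh2i
  have e1 : h1m * h1i = 1 := by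
    rw [hh1m, hh1i]
    simp only [neg_mul, mul_neg, neg_neg, mul_assoc, cBmBi, cGiG, cJJ, hJJ, hGiG,
      mul_one, one_mul]
  have e2 : h1i * h1m = 1 := by
    rw [hh1m, hh1i]
    simp only [neg_mul, mul_neg, neg_neg, mul_assoc, cJJ, cGGi, cBiBm, hBiBm, hGGi,
      mul_one, one_mul]
  have e3 : h2m * h2i = 1 := by
    rw [hh2m, hh2i]
    simp only [neg_mul, mul_neg, neg_neg, mul_assoc, cGtGit, cJJ, cGGi, cBiBm, cGiG,
      hGiG, hGGi, mul_one, one_mul]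
  have e4 : h2i * h2m = 1 := by
    rw [hh2m, hh2i]
    simp only [neg_mul, mul_neg, neg_neg, mul_assoc, cGGi, cBmBi, cGiG, cJJ, hGitGt,
      hGtGit, mul_one, one_mul]
  have e7 : h1m * G * h2m = Gᵀ := by
    rw [hh1m, hh2m]
    simp only [neg_mul, mul_neg, neg_neg, mul_assoc, cGGi, cBmBi, cGiG, cJJ,
      mul_one, one_mul]
  have cX : ∀ X : Matrix (Fin n ⊕ Fin n) (Fin n ⊕ Fin n) F,
      Giᵀ * (Jm * (Gi * X)) = Jm * (Ui * X) := by
    intro X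
    rw [hUi]
    simp only [neg_mul, mul_neg, neg_neg, mul_assoc, cJJ]
  have e5 : h1mᵀ * Jm * h1m = Jm := by
    rw [hh1m]
    simp only [Matrix.transpose_neg, Matrix.transpose_mul, Matrix.transpose_transpose, hJT,
      hBmT]
    simp only [neg_mul, mul_neg, neg_neg, mul_assoc, cJJ, cX, cUiBm, hUiBm, cBiBm,
      cUUi, hUUi, mul_one, one_mul]
  have hkk : h2m * Jm * h2mᵀ = Jm := by
    rw [hh2m]
    simp only [Matrix.transpose_mul, Matrix.transpose_transpose, hJT, hBiT]
    simp only [neg_mul, mul_neg, neg_neg, mul_assoc, cGJGJ, cUBm, cUUi, cBiBm]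
    simp only [cUdef, neg_mul, mul_neg, neg_neg, mul_assoc, cJJ, cGiG, cGtGit,
      hGtGit, mul_one, one_mul]
  have hkT : Jm * h2mᵀ = h2i * Jm := by
    calc Jm * h2mᵀ = (h2i * h2m) * (Jm * h2mᵀ) := by rw [e4, one_mul]
    _ = h2i * (h2m * Jm * h2mᵀ) := by simp only [mul_assoc]
    _ = h2i * Jm := by rw [hkk]
  have e6 : h2mᵀ * Jm * h2m = Jm := by
    have h5 : h2mᵀ = (-Jm) * (h2i * Jm) := by
      calc h2mᵀ = (-Jm) * (Jm * h2mᵀ) := by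
            rw [← mul_assoc, neg_mul, hJJ, neg_neg, one_mul]
      _ = (-Jm) * (h2i * Jm) := by rw [hkT]
    rw [h5]
    simp only [neg_mul, mul_neg, neg_neg, mul_assoc, cJJ]
    rw [e4, mul_one]
  refine ⟨⟨h1m, h1i, e1, e2⟩, ⟨h2m, h2i, e3, e4⟩, ?_, ?_, ?_⟩
  · show h1mᵀ * symplecticJ n F * h1m = symplecticJ n F
    rw [← hJm]; exact e5
  · show h2mᵀ * symplecticJ n F * h2m = symplecticJ n F
    rw [← hJm]; exact e6
  · show Gᵀ = h1m * G * h2m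
    exact e7.symm
end

section
/- Let F be an arbitrary field and n ≥ 1. Every double coset of Sp_{2n}(F) × Sp_{2n}(F) in GL_{2n}(F) contains an element of the form diag(x, I_n) with x ∈ GL_n(F); that is, for every g ∈ GL_{2n}(F) there exist h₁, h₂ ∈ Sp_{2n}(F) and x ∈ GL_n(F) such that g = h₁ · diag(x, I_n) · h₂. -/
open Polynomial

universe u v

variable {F : Type u} [Field F] {V : Type v} [AddCommGroup V] [Module F V]

/-- The `F`-linear map `q ↦ (aeval T q) v`. -/
noncomputable def evalMap (T : Module.End F V) (v : V) : F[X] →ₗ[F] V where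
  toFun q := (aeval T q) v
  map_add' p q := by simp [map_add, LinearMap.add_apply]
  map_smul' c q := by simp

theorem evalMap_apply (T : Module.End F V) (v : V) (q : F[X]) :
    evalMap T v q = (aeval T q) v := rfl

theorem aeval_aeval (T : Module.End F V) (v : V) (q r : F[X]) :
    (aeval T q) ((aeval T r) v) = (aeval T (q * r)) v := by
  rw [map_mul, Module.End.mul_apply]

theorem pow_across' (ω : LinearMap.BilinForm F V) (T : Module.End F V)
    (hsa : ∀ u v, ω (T u) v = ω u (T v)) (j : ℕ) (u v : V) :
    ω ((T^j) u) v = ω u ((T^j) v) := by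
  induction j generalizing u v with
  | zero => simp
  | succ k ih =>
    calc ω ((T^(k+1)) u) v = ω (T ((T^k) u)) v := by rw [pow_succ', Module.End.mul_apply]
      _ = ω ((T^k) u) (T v) := hsa _ _
      _ = ω u ((T^k) (T v)) := ih _ _
      _ = ω u ((T^(k+1)) v) := by rw [pow_succ, Module.End.mul_apply]

theorem aeval_across' (ω : LinearMap.BilinForm F V) (T : Module.End F V)
    (hsa : ∀ u v, ω (T u) v = ω u (T v)) (q : F[X]) (u v : V) :
    ω ((aeval T q) u) v = ω u ((aeval T q) v) := by
  induction q using Polynomial.induction_on' with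
  | add p q hp hq => simp [map_add, LinearMap.add_apply, hp, hq]
  | monomial i a =>
    simp only [aeval_monomial, Module.End.mul_apply, Module.algebraMap_end_apply,
      LinearMap.map_smul_of_tower, LinearMap.smul_apply, map_smul]
    rw [pow_across' ω T hsa]

theorem omega_skew' (ω : LinearMap.BilinForm F V) (h0 : ∀ v, ω v v = 0) (u v : V) :
    ω u v = - ω v u := by
  have h := h0 (u + v)
  simp only [map_add, LinearMap.add_apply, h0 u, h0 v] at h
  linear_combination h

theorem omega_aeval_self' (ω : LinearMap.BilinForm F V) (T : Module.End F V)
    (hsa : ∀ u v, ω (T u) v = ω u (T v)) (h0 : ∀ v, ω v v = 0)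
    (h1 : ∀ v, ω v (T v) = 0) (v : V) (q : F[X]) :
    ω v ((aeval T q) v) = 0 := by
  induction q using Polynomial.induction_on' with
  | add p q hp hq => simp [map_add, LinearMap.add_apply, hp, hq]
  | monomial i a =>
    simp only [aeval_monomial, Module.End.mul_apply, Module.algebraMap_end_apply,
      LinearMap.map_smul_of_tower, map_smul, smul_eq_mul, mul_eq_zero]
    right
    rcases Nat.even_or_odd i with ⟨j, hj⟩ | ⟨j, hj⟩
    · subst hj
      rw [pow_add, Module.End.mul_apply, ← pow_across' ω T hsa, h0]
    · subst hj
      have he : 2 * j + 1 = j + (j + 1) := by omega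
      have : T ^ (2 * j + 1) = T^j * (T * T^j) := by rw [he, pow_add, pow_succ']
      rw [this, Module.End.mul_apply, ← pow_across' ω T hsa, Module.End.mul_apply, h1]

theorem omega_cyclic' (ω : LinearMap.BilinForm F V) (T : Module.End F V)
    (hsa : ∀ u v, ω (T u) v = ω u (T v)) (h0 : ∀ v, ω v v = 0)
    (h1 : ∀ v, ω v (T v) = 0) (v : V) (q r : F[X]) :
    ω ((aeval T q) v) ((aeval T r) v) = 0 := by
  rw [aeval_across' ω T hsa, aeval_aeval]
  exact omega_aeval_self' ω T hsa h0 h1 v _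

/-- Main splitting lemma: invariant isotropic complementary pair. -/
theorem key_split : ∀ (N : ℕ) (V : Type v) [AddCommGroup V] [Module F V]
    [FiniteDimensional F V], Module.finrank F V ≤ N →
    ∀ (ω : LinearMap.BilinForm F V) (T : Module.End F V),
    ω.Nondegenerate → (∀ u v, ω (T u) v = ω u (T v)) →
    (∀ v, ω v v = 0) → (∀ v, ω v (T v) = 0) →
    ∃ L L' : Submodule F V, IsCompl L L' ∧ (∀ x ∈ L, T x ∈ L) ∧ (∀ x ∈ L', T x ∈ L') ∧
      (∀ x ∈ L, ∀ y ∈ L, ω x y = 0) ∧ (∀ x ∈ L', ∀ y ∈ L', ω x y = 0) := by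
  intro N
  induction N with
  | zero =>
    intro V _ _ _ hrk ω T hnd hsa h0 h1
    haveI : Subsingleton V := Module.finrank_zero_iff.mp (Nat.le_zero.mp hrk)
    refine ⟨⊤, ⊥, isCompl_top_bot, fun x _ => trivial, fun x hx => by rw [Submodule.mem_bot] at hx ⊢; rw [hx, map_zero], ?_, ?_⟩
    · intro x _ y _
      rw [Subsingleton.elim x 0, map_zero]; rfl
    · intro x _ y _
      rw [Subsingleton.elim x 0, map_zero]; rfl
  | succ N ih =>
    intro V _ _ _ hrk ω T hnd hsa h0 h1
    by_cases hV : Module.finrank F V = 0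
    · haveI : Subsingleton V := Module.finrank_zero_iff.mp hV
      refine ⟨⊤, ⊥, isCompl_top_bot, fun x _ => trivial, fun x hx => by rw [Submodule.mem_bot] at hx ⊢; rw [hx, map_zero], ?_, ?_⟩
      · intro x _ y _
        rw [Subsingleton.elim x 0, map_zero]; rfl
      · intro x _ y _
        rw [Subsingleton.elim x 0, map_zero]; rfl
    · -- main inductive step
      haveI : Nontrivial V := Module.nontrivial_of_finrank_pos (R := F) (Nat.pos_of_ne_zero hV)
      obtain ⟨w0, hw0⟩ := exists_ne (0 : V)
      haveI : Nontrivial (Module.End F V) := by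
        refine ⟨1, 0, fun h => hw0 ?_⟩
        have := congrArg (fun f : Module.End F V => f w0) h
        simpa using this
      have hint : IsIntegral F T := Algebra.IsIntegral.isIntegral T
      set m := minpoly F T with hm
      have hm0 : m ≠ 0 := minpoly.ne_zero hint
      have hmdeg : 0 < m.natDegree := minpoly.natDegree_pos hint
      have hnu : ¬IsUnit m := fun h => by
        have := Polynomial.natDegree_eq_zero_of_isUnit h; omega
      obtain ⟨p, hpirr, hpdvd⟩ := WfDvdMonoid.exists_irreducible_factor hnu hm0
      obtain ⟨k, π, hπnd, hfac⟩ := WfDvdMonoid.max_power_factor hm0 hpirr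
      have hp0 : p ≠ 0 := hpirr.ne_zero
      have hπ0 : π ≠ 0 := by intro h; rw [h, mul_zero] at hfac; exact hm0 hfac
      have hk : 1 ≤ k := by
        rcases Nat.eq_zero_or_pos k with h | h
        · exfalso; rw [h, pow_zero, one_mul] at hfac; exact hπnd (hfac ▸ hpdvd)
        · exact h
      have hpk : p * p^(k-1) = p^k := by rw [← pow_succ']; congr 1; omega
      have hsplit : m = (p^(k-1) * π) * p := by
        rw [hfac, ← hpk]; ring
      have hlow0 : p^(k-1) * π ≠ 0 := mul_ne_zero (pow_ne_zero _ hp0) hπ0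
      have hpdeg : 0 < p.natDegree := by
        rcases Nat.eq_zero_or_pos p.natDegree with h | h
        · exact absurd (Polynomial.isUnit_C.mpr (IsUnit.mk0 (p.coeff 0) (by
            intro hc
            apply hp0
            rw [Polynomial.eq_C_of_natDegree_eq_zero h, hc, map_zero]))) (by
            rw [← Polynomial.eq_C_of_natDegree_eq_zero h]; exact hpirr.not_isUnit)
        · exact h
      obtain ⟨w, hw⟩ : ∃ w, (aeval T (p^(k-1) * π)) w ≠ 0 := by
        by_contra h
        push_neg at h
        have hz : aeval T (p^(k-1) * π) = 0 := LinearMap.ext h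
        have hdeg := minpoly.degree_le_of_ne_zero F T hlow0 hz
        have h1' : m.natDegree ≤ (p^(k-1) * π).natDegree :=
          Polynomial.natDegree_le_natDegree hdeg
        have h2' : m.natDegree = (p^(k-1) * π).natDegree + p.natDegree := by
          rw [hsplit, Polynomial.natDegree_mul hlow0 hp0]
        omega
      set v₁ := (aeval T π) w with hv₁def
      have hv₁low : (aeval T (p^(k-1))) v₁ ≠ 0 := by
        rw [hv₁def, aeval_aeval]; exact hw
      have haevm : ∀ x : V, (aeval T m) x = 0 := by
        intro x; rw [minpoly.aeval]; rfl
      have hv₁k : (aeval T (p^k)) v₁ = 0 := by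
        rw [hv₁def, aeval_aeval, ← hfac]; exact haevm w
      have hv₁0 : v₁ ≠ 0 := by
        intro h; apply hv₁low; rw [h, map_zero]
      obtain ⟨a, b, hab⟩ : IsCoprime (p^k) π :=
        ((hpirr.coprime_iff_not_dvd).mpr hπnd).pow_left
      have kill : ∀ x : V, (aeval T (p^k)) x = 0 → (aeval T π) x = 0 → x = 0 := by
        intro x hx1 hx2
        have h1x : (aeval T (a * p^k + b * π)) x = x := by rw [hab]; simp
        rw [map_add, LinearMap.add_apply, ← aeval_aeval, ← aeval_aeval, hx1, hx2,
          map_zero, map_zero, add_zero] at h1x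
        exact h1x.symm
      set x₂ := (aeval T (p^(k-1))) v₁ with hx₂def
      have hx₂k : (aeval T (p^k)) x₂ = 0 := by
        rw [hx₂def, aeval_aeval, mul_comm, ← aeval_aeval, hv₁k, map_zero]
      have hs₂ : (aeval T π) x₂ ≠ 0 := fun h => hv₁low (kill x₂ hx₂k h)
      obtain ⟨u₀, hu₀⟩ : ∃ u₀, ω ((aeval T π) x₂) u₀ ≠ 0 := by
        by_contra h
        push_neg at h
        exact hs₂ (hnd.1 _ h)
      set u₁ := (aeval T π) u₀ with hu₁def
      have hu₁k : (aeval T (p^k)) u₁ = 0 := by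
        rw [hu₁def, aeval_aeval, ← hfac]; exact haevm u₀
      have hpair : ω x₂ u₁ ≠ 0 := by
        rw [hu₁def, ← aeval_across' ω T hsa]; exact hu₀
      have hmain : ∀ s : F[X], ¬ (p^k ∣ s) → ∃ t : F[X], ω v₁ ((aeval T (s * t)) u₁) ≠ 0 := by
        intro s hs
        have hs0 : s ≠ 0 := by rintro rfl; exact hs (dvd_zero _)
        obtain ⟨i, s₀, hs₀nd, hsfac⟩ := WfDvdMonoid.max_power_factor hs0 hpirr
        have hik : i < k := by
          by_contra hcon
          push_neg at hcon
          exact hs (hsfac ▸ dvd_mul_of_dvd_left (pow_dvd_pow p hcon) s₀)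
        obtain ⟨c, z, hcz⟩ := (hpirr.coprime_iff_not_dvd).mpr hs₀nd
        refine ⟨z * p^(k-1-i), ?_⟩
        have hpow : p^i * p^(k-1-i) = p^(k-1) := by rw [← pow_add]; congr 1; omega
        have hzs : z * s₀ = 1 - c * p := by linear_combination hcz
        have e1 : s * (z * p^(k-1-i)) = p^(k-1) - c * p^k := by
          calc s * (z * p^(k-1-i)) = (z * s₀) * (p^i * p^(k-1-i)) := by rw [hsfac]; ring
            _ = (1 - c * p) * p^(k-1) := by rw [hzs, hpow]
            _ = p^(k-1) - c * (p * p^(k-1)) := by ring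
            _ = p^(k-1) - c * p^k := by rw [hpk]
        have e2 : (aeval T (p^(k-1) - c * p^k)) u₁ = (aeval T (p^(k-1))) u₁ := by
          rw [map_sub, LinearMap.sub_apply, ← aeval_aeval, hu₁k, map_zero, sub_zero]
        rw [e1, e2, ← aeval_across' ω T hsa]
        exact hpair
      set M := LinearMap.range (evalMap T v₁) with hMdef
      set N' := LinearMap.range (evalMap T u₁) with hNdef
      set P := M ⊔ N' with hPdef
      have hv₁M : v₁ ∈ M := ⟨1, by rw [evalMap_apply, map_one]; rfl⟩
      have hMT : ∀ x ∈ M, T x ∈ M := by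
        rintro x ⟨q, rfl⟩
        exact ⟨X * q, by rw [evalMap_apply, evalMap_apply, ← aeval_aeval, aeval_X]⟩
      have hNT : ∀ x ∈ N', T x ∈ N' := by
        rintro x ⟨q, rfl⟩
        exact ⟨X * q, by rw [evalMap_apply, evalMap_apply, ← aeval_aeval, aeval_X]⟩
      have hMiso : ∀ x ∈ M, ∀ y ∈ M, ω x y = 0 := by
        rintro x ⟨q, rfl⟩ y ⟨r, rfl⟩
        exact omega_cyclic' ω T hsa h0 h1 v₁ q r
      have hNiso : ∀ x ∈ N', ∀ y ∈ N', ω x y = 0 := by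
        rintro x ⟨q, rfl⟩ y ⟨r, rfl⟩
        exact omega_cyclic' ω T hsa h0 h1 u₁ q r
      have core1 : ∀ x ∈ M, x ≠ 0 → ∃ y ∈ N', ω x y ≠ 0 := by
        rintro x ⟨q, rfl⟩ hx
        rw [evalMap_apply] at hx ⊢
        have hq : ¬ p^k ∣ q := by
          rintro ⟨q', rfl⟩
          apply hx
          rw [mul_comm, ← aeval_aeval, hv₁k, map_zero]
        obtain ⟨t, ht⟩ := hmain q hq
        refine ⟨(aeval T t) u₁, ⟨t, rfl⟩, ?_⟩
        rw [aeval_across' ω T hsa, aeval_aeval]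
        exact ht
      have core2 : ∀ y ∈ N', y ≠ 0 → ∃ x ∈ M, ω x y ≠ 0 := by
        rintro y ⟨r, rfl⟩ hy
        rw [evalMap_apply] at hy ⊢
        have hr : ¬ p^k ∣ r := by
          rintro ⟨r', rfl⟩
          apply hy
          rw [mul_comm, ← aeval_aeval, hu₁k, map_zero]
        obtain ⟨t, ht⟩ := hmain r hr
        refine ⟨(aeval T t) v₁, ⟨t, rfl⟩, ?_⟩
        rw [aeval_across' ω T hsa, aeval_aeval]
        rwa [mul_comm]
      have hMN : ∀ x, x ∈ M → x ∈ N' → x = 0 := by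
        intro x hxM hxN
        by_contra hx
        obtain ⟨y, hyN, hωy⟩ := core1 x hxM hx
        exact hωy (hNiso x hxN y hyN)
      have skew : ∀ u v : V, ω u v = - ω v u := omega_skew' ω h0
      have hPnd : (ω.restrict P).Nondegenerate := by
        refine (LinearMap.IsRefl.nondegenerate_iff_separatingLeft
          (show (ω.restrict P).IsAlt from fun x => h0 ↑x).isRefl).mpr ?_
        rintro ⟨z, hz⟩ hzall
        obtain ⟨zm, hzm, zn, hzn, rfl⟩ := Submodule.mem_sup.mp hz
        have key0 : ∀ x ∈ P, ω (zm + zn) x = 0 := by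
          intro x hx
          exact hzall ⟨x, hx⟩
        have hzn0 : zn = 0 := by
          by_contra hcon
          obtain ⟨x, hxM, hωx⟩ := core2 zn hzn hcon
          have h3 := key0 x (Submodule.mem_sup_left hxM)
          rw [map_add, LinearMap.add_apply, hMiso zm hzm x hxM, zero_add] at h3
          rw [skew x zn] at hωx
          rw [h3] at hωx
          simp at hωx
        have hzm0 : zm = 0 := by
          by_contra hcon
          obtain ⟨y, hyN, hωy⟩ := core1 zm hzm hcon
          have h3 := key0 y (Submodule.mem_sup_right hyN)
          rw [map_add, LinearMap.add_apply, hzn0, map_zero, LinearMap.zero_apply,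
            add_zero] at h3
          exact hωy h3
        exact Subtype.ext (show zm + zn = 0 by rw [hzm0, hzn0, add_zero])
      have halt : ω.IsAlt := h0
      have hrefl : ω.IsRefl := halt.isRefl
      have hcomplP : IsCompl P (ω.orthogonal P) :=
        LinearMap.BilinForm.isCompl_orthogonal_of_restrict_nondegenerate hrefl hPnd
      set W := ω.orthogonal P with hWdef
      have hWmem : ∀ x, x ∈ W ↔ ∀ n ∈ P, ω n x = 0 := fun x =>
        LinearMap.BilinForm.mem_orthogonal_iff
      have hPT : ∀ x ∈ P, T x ∈ P := by
        intro x hx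
        obtain ⟨xm, hxm, xn, hxn, rfl⟩ := Submodule.mem_sup.mp hx
        rw [map_add]
        exact add_mem (Submodule.mem_sup_left (hMT _ hxm)) (Submodule.mem_sup_right (hNT _ hxn))
      have hWT : ∀ x ∈ W, T x ∈ W := by
        intro x hx
        rw [hWmem] at hx ⊢
        intro n hn
        rw [← hsa]
        exact hx _ (hPT n hn)
      set T' : Module.End F ↥W := T.restrict hWT with hT'def
      have hT'coe : ∀ x : ↥W, (T' x : V) = T ↑x := fun x => rfl
      have hWnd : (ω.restrict W).Nondegenerate := by
        refine (LinearMap.IsRefl.nondegenerate_iff_separatingLeft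
          (show (ω.restrict W).IsAlt from fun x => h0 ↑x).isRefl).mpr ?_
        rintro ⟨z, hz⟩ hzall
        have hzP : ∀ n ∈ P, ω z n = 0 := by
          intro n hn
          rw [skew]
          rw [(hWmem z).mp hz n hn]
          rw [neg_zero]
        have hzV : ∀ v : V, ω z v = 0 := by
          intro v
          have hvtop : v ∈ P ⊔ W := by rw [hcomplP.sup_eq_top]; trivial
          obtain ⟨vp, hvp, vw, hvw, rfl⟩ := Submodule.mem_sup.mp hvtop
          rw [map_add, hzP vp hvp, zero_add]
          exact hzall ⟨vw, hvw⟩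
        exact Subtype.ext (hnd.1 z hzV)
      have hPrkpos : Module.finrank F ↥P ≠ 0 := by
        intro h
        have hPbot : P = ⊥ := Submodule.finrank_eq_zero.mp h
        apply hv₁0
        have hmem : v₁ ∈ P := Submodule.mem_sup_left hv₁M
        rw [hPbot, Submodule.mem_bot] at hmem
        exact hmem
      have hadd := Submodule.finrank_add_eq_of_isCompl hcomplP
      have hWrk : Module.finrank F ↥W ≤ N := by omega
      have hsa' : ∀ u v : ↥W, (ω.restrict W) (T' u) v = (ω.restrict W) u (T' v) := by
        intro u v
        exact hsa ↑u ↑v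
      have h0' : ∀ v : ↥W, (ω.restrict W) v v = 0 := fun v => h0 ↑v
      have h1' : ∀ v : ↥W, (ω.restrict W) v (T' v) = 0 := fun v => h1 ↑v
      obtain ⟨Lw, Lw', hcompl_w, hLwT, hLw'T, hLwiso, hLw'iso⟩ :=
        ih ↥W hWrk (ω.restrict W) T' hWnd hsa' h0' h1'
      set L := M ⊔ Lw.map W.subtype with hLdef
      set L' := N' ⊔ Lw'.map W.subtype with hL'def
      have hmapW : ∀ (S : Submodule F ↥W), ∀ x ∈ S.map W.subtype, x ∈ W := by
        rintro S x ⟨y, hy, rfl⟩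
        exact y.2
      refine ⟨L, L', ?_, ?_, ?_, ?_, ?_⟩
      · constructor
        · rw [Submodule.disjoint_def]
          intro x hxL hxL'
          obtain ⟨xm, hxm, xw, hxw, hxeq⟩ := Submodule.mem_sup.mp hxL
          obtain ⟨yn, hyn, yw, hyw, hyeq⟩ := Submodule.mem_sup.mp hxL'
          have hsum : xm + xw = yn + yw := hxeq.trans hyeq.symm
          have hdiff : xm - yn = yw - xw := by
            rw [sub_eq_sub_iff_add_eq_add, hsum, add_comm]
          have hPmem : xm - yn ∈ P :=
            sub_mem (Submodule.mem_sup_left hxm) (Submodule.mem_sup_right hyn)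
          have hWmem2 : xm - yn ∈ W := by
            rw [hdiff]
            exact sub_mem ((Submodule.map_subtype_le _ _) hyw) ((Submodule.map_subtype_le _ _) hxw)
          have h5 : xm - yn = 0 := by
            have := hcomplP.disjoint
            rw [Submodule.disjoint_def] at this
            exact this _ hPmem hWmem2
          have hxmyn : xm = yn := sub_eq_zero.mp h5
          have hxm0 : xm = 0 := hMN xm hxm (hxmyn ▸ hyn)
          have hxwyw : xw = yw := by
            have h6 : yw - xw = 0 := by rw [← hdiff, h5]
            exact (sub_eq_zero.mp h6).symm
          have hxw0 : xw = 0 := by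
            obtain ⟨aw, haw, haweq⟩ := hxw
            obtain ⟨bw, hbw, hbweq⟩ := hxwyw ▸ hyw
            have hab : aw = bw := by
              apply Subtype.ext
              rw [show (aw : V) = xw from haweq, show (bw : V) = xw from hbweq]
            have : aw = 0 := by
              have hd := hcompl_w.disjoint
              rw [Submodule.disjoint_def] at hd
              exact hd _ haw (hab ▸ hbw)
            rw [← haweq, this]
            rfl
          rw [← hxeq, hxm0, hxw0, add_zero]
        · rw [codisjoint_iff]
          have e1 : L ⊔ L' = (M ⊔ N') ⊔ (Lw.map W.subtype ⊔ Lw'.map W.subtype) := by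
            rw [hLdef, hL'def]
            rw [sup_assoc, sup_assoc]
            congr 1
            rw [← sup_assoc, ← sup_assoc]
            congr 1
            rw [sup_comm]
          rw [e1, ← Submodule.map_sup, hcompl_w.sup_eq_top, Submodule.map_subtype_top]
          exact hcomplP.sup_eq_top
      · intro x hx
        obtain ⟨xm, hxm, xw, hxw, rfl⟩ := Submodule.mem_sup.mp hx
        rw [map_add]
        refine add_mem (Submodule.mem_sup_left (hMT _ hxm)) (Submodule.mem_sup_right ?_)
        obtain ⟨aw, haw, rfl⟩ := hxw
        exact ⟨T' aw, hLwT aw haw, rfl⟩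
      · intro x hx
        obtain ⟨xm, hxm, xw, hxw, rfl⟩ := Submodule.mem_sup.mp hx
        rw [map_add]
        refine add_mem (Submodule.mem_sup_left (hNT _ hxm)) (Submodule.mem_sup_right ?_)
        obtain ⟨aw, haw, rfl⟩ := hxw
        exact ⟨T' aw, hLw'T aw haw, rfl⟩
      · intro x hx y hy
        obtain ⟨xm, hxm, xw, hxw, rfl⟩ := Submodule.mem_sup.mp hx
        obtain ⟨ym, hym, yw, hyw, rfl⟩ := Submodule.mem_sup.mp hy
        have t1 : ω xm ym = 0 := hMiso _ hxm _ hym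
        have t2 : ω xm yw = 0 := by
          have := (hWmem yw).mp (hmapW _ _ hyw) xm (Submodule.mem_sup_left hxm)
          exact this
        have t3 : ω xw ym = 0 := by
          rw [skew]
          rw [(hWmem xw).mp (hmapW _ _ hxw) ym (Submodule.mem_sup_left hym)]
          rw [neg_zero]
        have t4 : ω xw yw = 0 := by
          obtain ⟨aw, haw, rfl⟩ := hxw
          obtain ⟨bw, hbw, rfl⟩ := hyw
          exact hLwiso aw haw bw hbw
        simp only [map_add, LinearMap.add_apply, t1, t2, t3, t4]
        simp
      · intro x hx y hy
        obtain ⟨xm, hxm, xw, hxw, rfl⟩ := Submodule.mem_sup.mp hx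
        obtain ⟨ym, hym, yw, hyw, rfl⟩ := Submodule.mem_sup.mp hy
        have t1 : ω xm ym = 0 := hNiso _ hxm _ hym
        have t2 : ω xm yw = 0 := by
          exact (hWmem yw).mp (hmapW _ _ hyw) xm (Submodule.mem_sup_right hxm)
        have t3 : ω xw ym = 0 := by
          rw [skew]
          rw [(hWmem xw).mp (hmapW _ _ hxw) ym (Submodule.mem_sup_right hym)]
          rw [neg_zero]
        have t4 : ω xw yw = 0 := by
          obtain ⟨aw, haw, rfl⟩ := hxw
          obtain ⟨bw, hbw, rfl⟩ := hyw
          exact hLw'iso aw haw bw hbw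
        simp only [map_add, LinearMap.add_apply, t1, t2, t3, t4]
        simp

open Matrix

section translation

variable {F : Type*} [Field F] {n : ℕ}

theorem J_transpose : (symplecticJ n F)ᵀ = -(symplecticJ n F) := by
  rw [symplecticJ, Matrix.fromBlocks_transpose, Matrix.fromBlocks_neg]
  simp

theorem J_mul_J : (symplecticJ n F) * (symplecticJ n F) = -1 := by
  rw [symplecticJ, Matrix.fromBlocks_multiply,
    show (-1 : Matrix (Fin n ⊕ Fin n) (Fin n ⊕ Fin n) F) = -(fromBlocks 1 0 0 1) by
      rw [Matrix.fromBlocks_one],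
    Matrix.fromBlocks_neg]
  simp

theorem move_mulVec (M : Matrix (Fin n ⊕ Fin n) (Fin n ⊕ Fin n) F)
    (u w : (Fin n ⊕ Fin n) → F) : (M *ᵥ u) ⬝ᵥ w = u ⬝ᵥ (Mᵀ *ᵥ w) := by
  rw [Matrix.dotProduct_mulVec, Matrix.vecMul_transpose]

theorem J_alt (v : (Fin n ⊕ Fin n) → F) : v ⬝ᵥ (symplecticJ n F *ᵥ v) = 0 := by
  have hv : v = Sum.elim (v ∘ Sum.inl) (v ∘ Sum.inr) := (Sum.elim_comp_inl_inr v).symm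
  rw [symplecticJ]
  conv_lhs => rw [hv]
  rw [Matrix.fromBlocks_mulVec]
  simp only [Matrix.zero_mulVec, Matrix.one_mulVec, Matrix.neg_mulVec, zero_add, add_zero]
  rw [sumElim_dotProduct_sumElim]
  simp only [Sum.elim_comp_inl, Sum.elim_comp_inr]
  rw [dotProduct_neg, dotProduct_comm]
  ring

end translation

set_option maxHeartbeats 2000000 in
/-- Every `Sp_{2n}(F) × Sp_{2n}(F)` double coset in `GL_{2n}(F)` contains an element
of the form `diag(x, I_n)` with `x ∈ GL_n(F)`. -/
theorem doubleCoset_contains_diag (F : Type*) [Field F] (n : ℕ) (hn : 1 ≤ n)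
    (g : GL (Fin n ⊕ Fin n) F) :
    ∃ (h₁ h₂ : GL (Fin n ⊕ Fin n) F) (x : GL (Fin n) F),
      IsSymplecticMat (h₁ : Matrix (Fin n ⊕ Fin n) (Fin n ⊕ Fin n) F) ∧
      IsSymplecticMat (h₂ : Matrix (Fin n ⊕ Fin n) (Fin n ⊕ Fin n) F) ∧
      (g : Matrix (Fin n ⊕ Fin n) (Fin n ⊕ Fin n) F) =
        (h₁ : Matrix (Fin n ⊕ Fin n) (Fin n ⊕ Fin n) F) *
        Matrix.fromBlocks (x : Matrix (Fin n) (Fin n) F) 0 0 1 *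
        (h₂ : Matrix (Fin n ⊕ Fin n) (Fin n ⊕ Fin n) F) := by
  classical
  set Jm := symplecticJ n F with hJmdef
  set gm : Matrix (Fin n ⊕ Fin n) (Fin n ⊕ Fin n) F := ↑g with hgmdef
  set A : Matrix (Fin n ⊕ Fin n) (Fin n ⊕ Fin n) F := gmᵀ * Jm * gm with hAdef
  have hJt : Jmᵀ = -Jm := J_transpose
  have hJJ : Jm * Jm = -1 := J_mul_J
  have hAt : Aᵀ = -A := by
    rw [hAdef, Matrix.transpose_mul, Matrix.transpose_mul, Matrix.transpose_transpose, hJt]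
    simp [mul_assoc]
  set Tm : Matrix (Fin n ⊕ Fin n) (Fin n ⊕ Fin n) F := (-Jm) * A with hTmdef
  set T : Module.End F ((Fin n ⊕ Fin n) → F) := Matrix.mulVecLin Tm with hTdef
  have hJT : Jm * Tm = A := by
    rw [hTmdef, ← mul_assoc, mul_neg, hJJ, neg_neg, one_mul]
  have hTJ : Tmᵀ * Jm = A := by
    rw [hTmdef, Matrix.transpose_mul, Matrix.transpose_neg, hJt, hAt]
    simp [mul_assoc, hJJ]
  set ω : LinearMap.BilinForm F ((Fin n ⊕ Fin n) → F) :=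
    LinearMap.mk₂ F (fun u w => u ⬝ᵥ (Jm *ᵥ w))
      (fun m₁ m₂ w => by simp [add_dotProduct])
      (fun c m w => by simp [smul_dotProduct])
      (fun m w₁ w₂ => by simp [Matrix.mulVec_add, dotProduct_add])
      (fun c m w => by simp [Matrix.mulVec_smul, dotProduct_smul]) with hωdef
  have hωapply : ∀ u w, ω u w = u ⬝ᵥ (Jm *ᵥ w) := fun _ _ => rfl
  have hTapply : ∀ v, T v = Tm *ᵥ v := fun v => rfl
  have hJdet : Jm.det ≠ 0 := by
    have hinv : Invertible Jm := ⟨-Jm, by rw [neg_mul, hJJ, neg_neg], by rw [mul_neg, hJJ, neg_neg]⟩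
    have hu : IsUnit Jm := @isUnit_of_invertible _ _ Jm hinv
    exact ((Matrix.isUnit_iff_isUnit_det Jm).mp hu).ne_zero
  have hnd : ω.Nondegenerate := by
    refine (LinearMap.IsRefl.nondegenerate_iff_separatingLeft
      (show ω.IsAlt from fun v => J_alt v).isRefl).mpr ?_
    intro v hv
    exact (Matrix.nondegenerate_of_det_ne_zero hJdet).eq_zero_of_ortho hv
  have hsa : ∀ u v, ω (T u) v = ω u (T v) := by
    intro u v
    rw [hωapply, hωapply, hTapply, hTapply, move_mulVec, Matrix.mulVec_mulVec,
      Matrix.mulVec_mulVec, hTJ, hJT]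
  have h0 : ∀ v, ω v v = 0 := fun v => J_alt v
  have h1 : ∀ v, ω v (T v) = 0 := by
    intro v
    rw [hωapply, hTapply, Matrix.mulVec_mulVec, hJT, hAdef]
    have e1 : (gmᵀ * Jm * gm) *ᵥ v = gmᵀ *ᵥ (Jm *ᵥ (gm *ᵥ v)) := by
      rw [Matrix.mulVec_mulVec, Matrix.mulVec_mulVec]
    rw [e1, ← move_mulVec]
    exact J_alt _
  obtain ⟨L, L', hcompl, hLT, hL'T, hLiso, hL'iso⟩ :=
    key_split (F := F) (Module.finrank F ((Fin n ⊕ Fin n) → F)) ((Fin n ⊕ Fin n) → F)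
      le_rfl ω T hnd hsa h0 h1
  have skew : ∀ u v, ω u v = - ω v u := omega_skew' ω h0
  -- perfect pairing between L and L'
  have hperpL' : ∀ y : ((Fin n ⊕ Fin n) → F), y ∈ L' → (∀ x ∈ L, ω x y = 0) → y = 0 := by
    intro y hy hall
    apply hnd.1
    intro w
    have hw : w ∈ L ⊔ L' := by rw [hcompl.sup_eq_top]; trivial
    obtain ⟨wl, hwl, wl', hwl', rfl⟩ := Submodule.mem_sup.mp hw
    rw [map_add]
    have e1 : ω y wl = 0 := by rw [skew, hall wl hwl, neg_zero]
    have e2 : ω y wl' = 0 := hL'iso y hy wl' hwl'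
    rw [e1, e2, add_zero]
  have hperpL : ∀ x : ((Fin n ⊕ Fin n) → F), x ∈ L → (∀ y ∈ L', ω x y = 0) → x = 0 := by
    intro x hx hall
    apply hnd.1
    intro w
    have hw : w ∈ L ⊔ L' := by rw [hcompl.sup_eq_top]; trivial
    obtain ⟨wl, hwl, wl', hwl', rfl⟩ := Submodule.mem_sup.mp hw
    rw [map_add]
    rw [hLiso x hx wl hwl, hall wl' hwl', add_zero]
  set Ψ : ↥L →ₗ[F] (↥L' →ₗ[F] F) := (ω ∘ₗ L.subtype).compl₂ L'.subtype with hΨdef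
  have hΨapply : ∀ (x : ↥L) (y : ↥L'), Ψ x y = ω ↑x ↑y := fun _ _ => rfl
  set Φ : ↥L' →ₗ[F] Module.Dual F ↥L := Ψ.flip with hΦdef
  have hΦapply : ∀ (y : ↥L') (x : ↥L), Φ y x = ω ↑x ↑y := fun _ _ => rfl
  have hΦinj : Function.Injective Φ := by
    rw [← LinearMap.ker_eq_bot]
    rw [LinearMap.ker_eq_bot']
    intro y hy
    apply Subtype.ext
    refine hperpL' ↑y y.2 ?_
    intro x hx
    have := LinearMap.congr_fun hy ⟨x, hx⟩
    rw [hΦapply] at this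
    exact this
  have hΨinj : Function.Injective Ψ := by
    rw [← LinearMap.ker_eq_bot]
    rw [LinearMap.ker_eq_bot']
    intro x hx
    apply Subtype.ext
    refine hperpL ↑x x.2 ?_
    intro y hy
    have := LinearMap.congr_fun hx ⟨y, hy⟩
    rw [hΨapply] at this
    exact this
  have hrkV : Module.finrank F ((Fin n ⊕ Fin n) → F) = n + n := by
    rw [Module.finrank_pi]
    simp
  have r1 : Module.finrank F ↥L' ≤ Module.finrank F ↥L := by
    have := LinearMap.finrank_le_finrank_of_injective hΦinj
    rwa [Subspace.dual_finrank_eq] at this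
  have r2 : Module.finrank F ↥L ≤ Module.finrank F ↥L' := by
    have := LinearMap.finrank_le_finrank_of_injective hΨinj
    rwa [Subspace.dual_finrank_eq] at this
  have hsumLL := Submodule.finrank_add_eq_of_isCompl hcompl
  rw [hrkV] at hsumLL
  have hLn : Module.finrank F ↥L = n := by omega
  have hL'n : Module.finrank F ↥L' = n := by omega
  set a : Module.Basis (Fin n) F ↥L := Module.finBasisOfFinrankEq F ↥L hLn with hadef
  have hdim : Module.finrank F ↥L' = Module.finrank F (Module.Dual F ↥L) := by
    rw [Subspace.dual_finrank_eq, hLn, hL'n]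
  set e : ↥L' ≃ₗ[F] Module.Dual F ↥L := Φ.linearEquivOfInjective hΦinj hdim with hedef
  set bbasis : Module.Basis (Fin n) F ↥L' := a.dualBasis.map e.symm with hbdef
  have hbd : ∀ i j, ω ↑(a i) ↑(bbasis j) = if i = j then 1 else 0 := by
    intro i j
    have h1 : Φ (bbasis j) = a.coord j := by
      rw [hbdef, Module.Basis.map_apply]
      have : Φ (e.symm (a.dualBasis j)) = e (e.symm (a.dualBasis j)) := by
        rw [hedef, LinearMap.linearEquivOfInjective_apply]
      rw [this, e.apply_symm_apply, Module.Basis.coe_dualBasis]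
    have h2 := LinearMap.congr_fun h1 (a i)
    rw [hΦapply] at h2
    rw [h2, Module.Basis.coord_apply, Module.Basis.repr_self_apply]
  set c : Module.Basis (Fin n ⊕ Fin n) F ((Fin n ⊕ Fin n) → F) :=
    (a.prod bbasis).map (Submodule.prodEquivOfIsCompl L L' hcompl) with hcdef
  have hc_inl : ∀ i, (c (Sum.inl i) : (Fin n ⊕ Fin n) → F) = ↑(a i) := by
    intro i
    rw [hcdef, Module.Basis.map_apply, Module.Basis.prod_apply]
    simp only [Sum.elim_inl, Function.comp_apply]
    have hco := Submodule.coe_prodEquivOfIsCompl L L' hcompl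
    calc (Submodule.prodEquivOfIsCompl L L' hcompl) ((LinearMap.inl F ↥L ↥L') (a i))
        = (L.subtype.coprod L'.subtype) ((LinearMap.inl F ↥L ↥L') (a i)) := by
          rw [← hco]; rfl
      _ = ↑(a i) := by simp
  have hc_inr : ∀ i, (c (Sum.inr i) : (Fin n ⊕ Fin n) → F) = ↑(bbasis i) := by
    intro i
    rw [hcdef, Module.Basis.map_apply, Module.Basis.prod_apply]
    simp only [Sum.elim_inr, Function.comp_apply]
    have hco := Submodule.coe_prodEquivOfIsCompl L L' hcompl
    calc (Submodule.prodEquivOfIsCompl L L' hcompl) ((LinearMap.inr F ↥L ↥L') (bbasis i))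
        = (L.subtype.coprod L'.subtype) ((LinearMap.inr F ↥L ↥L') (bbasis i)) := by
          rw [← hco]; rfl
      _ = ↑(bbasis i) := by simp
  set s : Matrix (Fin n ⊕ Fin n) (Fin n ⊕ Fin n) F :=
    (Pi.basisFun F (Fin n ⊕ Fin n)).toMatrix ⇑c with hsdef
  have hscol : ∀ i j, s i j = (c j : (Fin n ⊕ Fin n) → F) i := by
    intro i j
    rw [hsdef, Module.Basis.toMatrix_apply, Pi.basisFun_repr]
  have hquad : ∀ (Mm : Matrix (Fin n ⊕ Fin n) (Fin n ⊕ Fin n) F) (u w : Fin n ⊕ Fin n),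
      (sᵀ * Mm * s) u w = (c u : (Fin n ⊕ Fin n) → F) ⬝ᵥ (Mm *ᵥ (c w : (Fin n ⊕ Fin n) → F)) := by
    intro Mm u w
    simp only [Matrix.mul_apply, Matrix.transpose_apply, dotProduct, Matrix.mulVec,
      hscol, Finset.sum_mul, Finset.mul_sum]
    rw [Finset.sum_comm]
    apply Finset.sum_congr rfl
    intro i _
    apply Finset.sum_congr rfl
    intro j _
    ring
  have hLmem : ∀ i, ↑(a i) ∈ L := fun i => (a i).2
  have hL'mem : ∀ i, ↑(bbasis i) ∈ L' := fun i => (bbasis i).2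
  have hωs : sᵀ * Jm * s = Jm := by
    ext u w
    rw [hquad]
    cases u with
    | inl i =>
      cases w with
      | inl j =>
        have e : (c (Sum.inl i) : (Fin n ⊕ Fin n) → F) ⬝ᵥ (Jm *ᵥ (c (Sum.inl j) : (Fin n ⊕ Fin n) → F))
            = ω ↑(a i) ↑(a j) := by rw [hc_inl, hc_inl]; rfl
        rw [e, hLiso _ (hLmem i) _ (hLmem j), hJmdef, symplecticJ]
        simp
      | inr j =>
        have e : (c (Sum.inl i) : (Fin n ⊕ Fin n) → F) ⬝ᵥ (Jm *ᵥ (c (Sum.inr j) : (Fin n ⊕ Fin n) → F))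
            = ω ↑(a i) ↑(bbasis j) := by rw [hc_inl, hc_inr]; rfl
        rw [e, hbd, hJmdef, symplecticJ]
        simp [Matrix.one_apply]
    | inr i =>
      cases w with
      | inl j =>
        have e : (c (Sum.inr i) : (Fin n ⊕ Fin n) → F) ⬝ᵥ (Jm *ᵥ (c (Sum.inl j) : (Fin n ⊕ Fin n) → F))
            = ω ↑(bbasis i) ↑(a j) := by rw [hc_inr, hc_inl]; rfl
        rw [e, skew, hbd j i, hJmdef, symplecticJ]
        simp [Matrix.one_apply, eq_comm]
      | inr j =>
        have e : (c (Sum.inr i) : (Fin n ⊕ Fin n) → F) ⬝ᵥ (Jm *ᵥ (c (Sum.inr j) : (Fin n ⊕ Fin n) → F))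
            = ω ↑(bbasis i) ↑(bbasis j) := by rw [hc_inr, hc_inr]; rfl
        rw [e, hL'iso _ (hL'mem i) _ (hL'mem j), hJmdef, symplecticJ]
        simp
  have hβL : ∀ x ∈ L, ∀ y ∈ L, x ⬝ᵥ (A *ᵥ y) = 0 := by
    intro x hx y hy
    have e : A *ᵥ y = Jm *ᵥ (Tm *ᵥ y) := by rw [Matrix.mulVec_mulVec, hJT]
    rw [e]
    have e2 : x ⬝ᵥ (Jm *ᵥ (Tm *ᵥ y)) = ω x (T y) := by rw [hTapply]; rfl
    rw [e2]
    exact hLiso x hx _ (hLT y hy)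
  have hβL' : ∀ x ∈ L', ∀ y ∈ L', x ⬝ᵥ (A *ᵥ y) = 0 := by
    intro x hx y hy
    have e : A *ᵥ y = Jm *ᵥ (Tm *ᵥ y) := by rw [Matrix.mulVec_mulVec, hJT]
    rw [e]
    have e2 : x ⬝ᵥ (Jm *ᵥ (Tm *ᵥ y)) = ω x (T y) := by rw [hTapply]; rfl
    rw [e2]
    exact hL'iso x hx _ (hL'T y hy)
  set B : Matrix (Fin n) (Fin n) F :=
    Matrix.of (fun i j => ((a i : (Fin n ⊕ Fin n) → F)) ⬝ᵥ (A *ᵥ ↑(bbasis j))) with hBdef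
  have hAskew : ∀ x y : (Fin n ⊕ Fin n) → F, x ⬝ᵥ (A *ᵥ y) = -(y ⬝ᵥ (A *ᵥ x)) := by
    intro x y
    rw [dotProduct_comm, move_mulVec, hAt, Matrix.neg_mulVec, dotProduct_neg]
  have hAs : sᵀ * A * s = Matrix.fromBlocks 0 B (-Bᵀ) 0 := by
    ext u w
    rw [hquad]
    cases u with
    | inl i =>
      cases w with
      | inl j =>
        rw [hc_inl, hc_inl, hβL _ (hLmem i) _ (hLmem j)]
        simp
      | inr j =>
        rw [hc_inl, hc_inr]
        simp [hBdef]
    | inr i =>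
      cases w with
      | inl j =>
        rw [hc_inr, hc_inl, hAskew]
        simp [hBdef]
      | inr j =>
        rw [hc_inr, hc_inr, hβL' _ (hL'mem i) _ (hL'mem j)]
        simp
  have hgu : IsUnit gm := ⟨g, rfl⟩
  have hgdet : gm.det ≠ 0 := ((Matrix.isUnit_iff_isUnit_det gm).mp hgu).ne_zero
  have hAdet : A.det ≠ 0 := by
    rw [hAdef, Matrix.det_mul, Matrix.det_mul, Matrix.det_transpose]
    exact mul_ne_zero (mul_ne_zero hgdet hJdet) hgdet
  have hsInv : Invertible s := (Pi.basisFun F (Fin n ⊕ Fin n)).invertibleToMatrix c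
  have hsdet : s.det ≠ 0 :=
    ((Matrix.isUnit_iff_isUnit_det s).mp (@isUnit_of_invertible _ _ s hsInv)).ne_zero
  have hblk : (Matrix.fromBlocks 0 B (-Bᵀ) 0 : Matrix (Fin n ⊕ Fin n) (Fin n ⊕ Fin n) F).det ≠ 0 := by
    rw [← hAs, Matrix.det_mul, Matrix.det_mul, Matrix.det_transpose]
    exact mul_ne_zero (mul_ne_zero hsdet hAdet) hsdet
  have hBdet : B.det ≠ 0 := by
    intro hB0
    obtain ⟨v0, hv0ne, hv0⟩ := Matrix.exists_mulVec_eq_zero_iff.mpr hB0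
    apply hblk
    rw [← Matrix.exists_mulVec_eq_zero_iff]
    refine ⟨Sum.elim 0 v0, ?_, ?_⟩
    · intro h
      apply hv0ne
      funext i
      exact congrFun h (Sum.inr i)
    · rw [Matrix.fromBlocks_mulVec]
      funext u
      cases u with
      | inl i => simp [Sum.elim_comp_inl, Sum.elim_comp_inr, hv0]
      | inr i => simp [Sum.elim_comp_inl, Sum.elim_comp_inr]
  set D : Matrix (Fin n ⊕ Fin n) (Fin n ⊕ Fin n) F := Matrix.fromBlocks Bᵀ 0 0 1 with hDdef
  have hDJD : Dᵀ * Jm * D = Matrix.fromBlocks 0 B (-Bᵀ) 0 := by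
    rw [hDdef, hJmdef, symplecticJ, Matrix.fromBlocks_transpose, Matrix.fromBlocks_multiply,
      Matrix.fromBlocks_multiply]
    congr 1 <;> simp
  have hDdet : D.det ≠ 0 := by
    rw [hDdef, Matrix.det_fromBlocks_zero₂₁, Matrix.det_transpose, Matrix.det_one, mul_one]
    exact hBdet
  have hsU : IsUnit s := (Matrix.isUnit_iff_isUnit_det s).mpr (isUnit_iff_ne_zero.mpr hsdet)
  have hDU : IsUnit D := (Matrix.isUnit_iff_isUnit_det D).mpr (isUnit_iff_ne_zero.mpr hDdet)
  have hBTU : IsUnit Bᵀ := (Matrix.isUnit_iff_isUnit_det Bᵀ).mpr (isUnit_iff_ne_zero.mpr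
    (by rw [Matrix.det_transpose]; exact hBdet))
  set si : Matrix (Fin n ⊕ Fin n) (Fin n ⊕ Fin n) F := ↑hsU.unit⁻¹ with hsidef
  set Di : Matrix (Fin n ⊕ Fin n) (Fin n ⊕ Fin n) F := ↑hDU.unit⁻¹ with hDidef
  have hssi : s * si = 1 := by
    have h' := hsU.unit.mul_inv
    rw [hsU.unit_spec] at h'
    exact h'
  have hsis : si * s = 1 := by
    have h' := hsU.unit.inv_mul
    rw [hsU.unit_spec] at h'
    exact h'
  have hDDi : D * Di = 1 := by
    have h' := hDU.unit.mul_inv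
    rw [hDU.unit_spec] at h'
    exact h'
  have hDiD : Di * D = 1 := by
    have h' := hDU.unit.inv_mul
    rw [hDU.unit_spec] at h'
    exact h'
  refine ⟨g * hsU.unit * hDU.unit⁻¹, hsU.unit⁻¹, hBTU.unit, ?_, ?_, ?_⟩
  · show (↑(g * hsU.unit * hDU.unit⁻¹) : Matrix (Fin n ⊕ Fin n) (Fin n ⊕ Fin n) F)ᵀ *
      symplecticJ n F * (↑(g * hsU.unit * hDU.unit⁻¹) : Matrix (Fin n ⊕ Fin n) (Fin n ⊕ Fin n) F) = symplecticJ n F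
    have hval1 : (↑(g * hsU.unit * hDU.unit⁻¹) : Matrix (Fin n ⊕ Fin n) (Fin n ⊕ Fin n) F)
        = gm * s * Di := by
      rw [Units.val_mul, Units.val_mul, hsU.unit_spec]
    rw [hval1, ← hJmdef]
    have hAeq : sᵀ * A * s = Dᵀ * Jm * D := by rw [hAs, hDJD]
    calc (gm * s * Di)ᵀ * Jm * (gm * s * Di)
        = Diᵀ * (sᵀ * (gmᵀ * Jm * gm) * s) * Di := by
          rw [Matrix.transpose_mul, Matrix.transpose_mul]
          simp only [mul_assoc]
      _ = Diᵀ * (Dᵀ * Jm * D) * Di := by rw [← hAdef, hAeq]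
      _ = (D * Di)ᵀ * Jm * (D * Di) := by
          rw [Matrix.transpose_mul]
          simp only [mul_assoc]
      _ = Jm := by rw [hDDi]; simp
  · show (↑(hsU.unit⁻¹) : Matrix (Fin n ⊕ Fin n) (Fin n ⊕ Fin n) F)ᵀ *
      symplecticJ n F * (↑(hsU.unit⁻¹) : Matrix (Fin n ⊕ Fin n) (Fin n ⊕ Fin n) F) = symplecticJ n F
    rw [← hsidef, ← hJmdef]
    calc siᵀ * Jm * si = siᵀ * (sᵀ * Jm * s) * si := by rw [hωs]
      _ = (s * si)ᵀ * Jm * (s * si) := by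
          rw [Matrix.transpose_mul]
          simp only [mul_assoc]
      _ = Jm := by rw [hssi]; simp
  · show gm = (↑(g * hsU.unit * hDU.unit⁻¹) : Matrix (Fin n ⊕ Fin n) (Fin n ⊕ Fin n) F) *
      Matrix.fromBlocks (↑hBTU.unit) 0 0 1 * (↑(hsU.unit⁻¹) : Matrix (Fin n ⊕ Fin n) (Fin n ⊕ Fin n) F)
    have hval1 : (↑(g * hsU.unit * hDU.unit⁻¹) : Matrix (Fin n ⊕ Fin n) (Fin n ⊕ Fin n) F)
        = gm * s * Di := by
      rw [Units.val_mul, Units.val_mul, hsU.unit_spec]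
    rw [hval1, hBTU.unit_spec, ← hsidef, ← hDdef]
    symm
    calc gm * s * Di * D * si = gm * s * (Di * D) * si := by simp only [mul_assoc]
      _ = gm * s * si := by rw [hDiD, mul_one]
      _ = gm * (s * si) := by rw [mul_assoc]
      _ = gm := by rw [hssi, mul_one]
end

section
/- Let (V, ω) be a finite-dimensional vector space over a field F with a nondegenerate alternating bilinear form ω, and let x : V → V be an F-linear map which is ω-self-adjoint, i.e., ω(x v, u) = ω(v, x u) for all v, u ∈ V. Let P, Q ∈ F[t] be coprime polynomials with (P·Q)(x) = 0. Then the restriction of ω to the subspace ker(P(x)) is nondegenerate; in particular (ker(P(x)), ω|_{ker(P(x))}) is again a symplectic space. -/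
/-- Let `(V, ω)` be a finite-dimensional symplectic space (ω nondegenerate and
alternating), `x` an `ω`-self-adjoint endomorphism, and `P, Q` coprime polynomials
with `(P·Q)(x) = 0`. Then the restriction of `ω` to `ker P(x)` is nondegenerate. -/
theorem restriction_nondegenerate_ker (F V : Type*) [Field F] [AddCommGroup V]
    [Module F V] [FiniteDimensional F V]
    (ω : LinearMap.BilinForm F V) (hnd : ω.Nondegenerate) (halt : ω.IsAlt)
    (x : Module.End F V) (hx : ∀ v u : V, ω (x v) u = ω v (x u))
    (P Q : Polynomial F) (hPQ : IsCoprime P Q)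
    (hPQx : Polynomial.aeval x (P * Q) = 0) :
    ∀ w ∈ LinearMap.ker (Polynomial.aeval x P), w ≠ 0 →
      ∃ w' ∈ LinearMap.ker (Polynomial.aeval x P), ω w w' ≠ 0 := by
  -- polynomials of x are self-adjoint
  have hpoly : ∀ (p : Polynomial F) (v u : V),
      ω (Polynomial.aeval x p v) u = ω v (Polynomial.aeval x p u) := by
    intro p
    induction p using Polynomial.induction_on with
    | C c => intro v u; simp
    | add p q hp hq => intro v u; simp [hp, hq]
    | monomial n c hc =>
        intro v u
        have e1 : (Polynomial.aeval x) (Polynomial.C c * Polynomial.X ^ (n + 1)) v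
            = (Polynomial.aeval x) (Polynomial.C c * Polynomial.X ^ n) (x v) := by
          simp [pow_succ, Module.End.mul_apply]
        have e2 : x ((Polynomial.aeval x) (Polynomial.C c * Polynomial.X ^ n) u)
            = (Polynomial.aeval x) (Polynomial.C c * Polynomial.X ^ (n + 1)) u := by
          simp [pow_succ']
        rw [e1, hc (x v) u, hx, e2]
  intro w hw hw0
  rw [LinearMap.mem_ker] at hw
  obtain ⟨A, B, hAB⟩ := hPQ
  have hwfix : Polynomial.aeval x B (Polynomial.aeval x Q w) = w := by
    have h1 : Polynomial.aeval x (A * P + B * Q) w = w := by rw [hAB]; simp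
    simpa [map_add, map_mul, Module.End.mul_apply, hw] using h1
  have hune : ¬ ∀ u : V, ω w u = 0 := fun h => hw0 (hnd.1 w h)
  push_neg at hune
  obtain ⟨u, hu⟩ := hune
  refine ⟨Polynomial.aeval x (B * Q) u, ?_, ?_⟩
  · rw [LinearMap.mem_ker, ← Module.End.mul_apply, ← map_mul,
      show P * (B * Q) = B * (P * Q) by ring, map_mul, Module.End.mul_apply, hPQx]
    simp
  · rw [← hpoly (B * Q) w u, map_mul, Module.End.mul_apply, hwfix]
    exact hu
end
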